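/- For every nonnegative integer m, the number of self-conjugate (2t_1, ..., 2t_p)-core partitions of n with disparity m(m+1)/2 equals the number of (t_1, ..., t_p)-core partitions of k if n = 4k + m(m+1)/2, and 0 otherwise. -/

import Mathlib

/-- A partition, encoded as an antitone, eventually-zero function (0-indexed parts). -/
def IsPartition (l : ℕ → ℕ) : Prop := Antitone l ∧ ∃ N, l N = 0

/-- The conjugate partition: `conj l j` is the number of rows whose length exceeds `j`. -/
noncomputable def conj (l : ℕ → ℕ) (j : ℕ) : ℕ := Set.ncard {i | j < l i}

/-- Hook length of the box in row `i`, column `j` (0-indexed): arm + leg + 1. -/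
noncomputable def hookLen (l : ℕ → ℕ) (i j : ℕ) : ℕ :=
  (l i - (j + 1)) + (conj l j - (i + 1)) + 1

/-- A self-conjugate partition equals its conjugate. -/
def SelfConj (l : ℕ → ℕ) : Prop := conj l = l

/-- Side length of the Durfee square: the number of boxes on the main diagonal. -/
noncomputable def durfee (l : ℕ → ℕ) : ℕ := Set.ncard {i | i < l i}

/-- The number of boxes of the Young diagram. -/
noncomputable def psize (l : ℕ → ℕ) : ℕ := Set.ncard {p : ℕ × ℕ | p.2 < l p.1}

/-- The disparity: (#boxes with odd hook length) - (#boxes with even hook length). -/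
noncomputable def dp (l : ℕ → ℕ) : ℤ :=
  (Set.ncard {p : ℕ × ℕ | p.2 < l p.1 ∧ Odd (hookLen l p.1 p.2)} : ℤ) -
  (Set.ncard {p : ℕ × ℕ | p.2 < l p.1 ∧ Even (hookLen l p.1 p.2)} : ℤ)

/-- The set of main diagonal hook lengths. -/
def Dset (l : ℕ → ℕ) : Set ℕ := {x | ∃ i, i < l i ∧ x = hookLen l i i}

/-- Main diagonal hook lengths congruent to 1 mod 4. -/
def D1 (l : ℕ → ℕ) : Set ℕ := {x ∈ Dset l | x % 4 = 1}

/-- Main diagonal hook lengths congruent to 3 mod 4. -/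
def D3 (l : ℕ → ℕ) : Set ℕ := {x ∈ Dset l | x % 4 = 3}

/-- A `t`-core partition: no hook length is divisible by `t`. -/
def IsCore (l : ℕ → ℕ) (t : ℕ) : Prop := ∀ i j, j < l i → ¬ (t ∣ hookLen l i j)

namespace SCC

lemma ncard_Iio_nat (n : ℕ) : (Set.Iio n).ncard = n := by
  rw [← Finset.coe_range, Set.ncard_coe_finset, Finset.card_range]

lemma lower_eq_Iio {S : Set ℕ} (hfin : S.Finite) (hlow : ∀ ⦃a b : ℕ⦄, a ≤ b → b ∈ S → a ∈ S) :
    S = Set.Iio S.ncard := by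
  rcases S.eq_empty_or_nonempty with h | h
  · subst h; rw [Set.ncard_empty]; ext x; simp
  · have hne : hfin.toFinset.Nonempty := by simpa using h
    set M := hfin.toFinset.max' hne with hM
    have hMS : M ∈ S := by have := hfin.toFinset.max'_mem hne; simpa using this
    have hS : S = Set.Iic M := by
      ext x
      constructor
      · intro hx
        simp only [Set.mem_Iic]
        exact Finset.le_max' _ _ (by simpa using hx)
      · intro hx; exact hlow hx hMS
    have h2 : (Set.Iic M : Set ℕ) = Set.Iio (M+1) := by ext x; simp
    rw [hS, h2, ncard_Iio_nat]

variable {l : ℕ → ℕ}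

lemma conj_set (hl : IsPartition l) (j : ℕ) : {i | j < l i} = Set.Iio (conj l j) := by
  obtain ⟨hanti, N, hN⟩ := hl
  have hfin : {i | j < l i}.Finite := by
    apply Set.Finite.subset (Set.finite_Iio N)
    intro i hi
    simp only [Set.mem_setOf_eq] at hi
    simp only [Set.mem_Iio]
    by_contra h
    push_neg at h
    have := hanti h
    omega
  exact lower_eq_Iio hfin (fun a b hab hb => lt_of_lt_of_le hb (hanti hab))

lemma adj (hl : IsPartition l) {i j : ℕ} : i < conj l j ↔ j < l i := by
  rw [← Set.mem_Iio, ← conj_set hl j]; rfl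

lemma conj_anti (hl : IsPartition l) : Antitone (conj l) := by
  intro j j' hjj'
  by_contra h
  push_neg at h
  have h1 : j' < l (conj l j) := (adj hl).1 h
  exact lt_irrefl _ ((adj hl).2 (lt_of_le_of_lt hjj' h1))

lemma conj_part (hl : IsPartition l) : IsPartition (conj l) := by
  refine ⟨conj_anti hl, l 0, ?_⟩
  have : {i | l 0 < l i} = (∅ : Set ℕ) := by
    ext i; simp only [Set.mem_setOf_eq, Set.mem_empty_iff_false, iff_false, not_lt]
    exact hl.1 (Nat.zero_le i)
  rw [conj, this, Set.ncard_empty]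

lemma conj_conj (hl : IsPartition l) : conj (conj l) = l := by
  funext i
  have : {j | i < conj l j} = Set.Iio (l i) := by
    ext j; simp only [Set.mem_setOf_eq, Set.mem_Iio]; exact adj hl
  rw [conj, this, ncard_Iio_nat]



/-! ### beta sets -/

def beta (l : ℕ → ℕ) : Set ℤ := {x | ∃ i : ℕ, x = (l i : ℤ) - 1 - i}

def Maya (X : Set ℤ) : Prop := (∃ N : ℤ, ∀ x < N, x ∈ X) ∧ (∃ N : ℤ, ∀ x, N < x → x ∉ X)

noncomputable def charge (X : Set ℤ) : ℤ :=
  ((X ∩ Set.Ici 0).ncard : ℤ) - ((Set.Iio 0 \ X).ncard : ℤ)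

def Sym (X : Set ℤ) : Prop := ∀ x : ℤ, x ∈ X ↔ (-1 - x) ∉ X

def PP (S C : Set ℤ) : Set (ℤ × ℤ) := {q | q.1 ∈ S ∧ q.2 ∈ C ∧ q.2 < q.1}
def Pairs (X : Set ℤ) : Set (ℤ × ℤ) := PP X Xᶜ

lemma fmono (hl : IsPartition l) : StrictAnti (fun i : ℕ => (l i : ℤ) - 1 - i) := by
  apply strictAnti_nat_of_succ_lt
  intro i
  have := hl.1 (Nat.le_succ i)
  show (l (i+1) : ℤ) - 1 - (i+1 : ℕ) < (l i : ℤ) - 1 - i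
  have h2 : (l (i+1) : ℤ) ≤ l i := by exact_mod_cast this
  push_cast
  omega

lemma fanti2 (hl : IsPartition l) {a b : ℕ} (hab : a ≤ b) :
    (l b : ℤ) - 1 - b + (b - a) ≤ (l a : ℤ) - 1 - a := by
  have h2 : (l b : ℤ) ≤ l a := by exact_mod_cast hl.1 hab
  have h3 : (a : ℤ) ≤ b := by exact_mod_cast hab
  omega

lemma gmono (hl : IsPartition l) : StrictMono (fun j : ℕ => (j : ℤ) - conj l j) := by
  apply strictMono_nat_of_lt_succ
  intro j
  have := conj_anti hl (Nat.le_succ j)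
  show (j:ℤ) - conj l j < ((j+1 : ℕ) : ℤ) - conj l (j+1)
  have h2 : (conj l (j+1) : ℤ) ≤ conj l j := by exact_mod_cast this
  push_cast
  omega

lemma gap_iff (hl : IsPartition l) (x : ℤ) :
    x ∉ beta l ↔ ∃ j : ℕ, x = (j : ℤ) - conj l j := by
  constructor
  · intro hx
    have hne : ∀ i : ℕ, x ≠ (l i : ℤ) - 1 - i := fun i h => hx ⟨i, h⟩
    set S := {i : ℕ | x < (l i : ℤ) - 1 - i} with hSdef
    have hlow : ∀ ⦃a b : ℕ⦄, a ≤ b → b ∈ S → a ∈ S := by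
      intro a b hab hb
      simp only [hSdef, Set.mem_setOf_eq] at hb ⊢
      have := fanti2 hl hab
      omega
    have hfin : S.Finite := by
      obtain ⟨N, hN⟩ := hl.2
      apply Set.Finite.subset (Set.finite_Iio (N + (1 + x.natAbs)))
      intro i hi
      simp only [hSdef, Set.mem_setOf_eq] at hi
      simp only [Set.mem_Iio]
      by_contra h
      push_neg at h
      have h0 : l i = 0 := Nat.le_zero.1 (hN ▸ hl.1 (by omega))
      rw [h0] at hi
      have : x.natAbs ≤ i := by omega
      have : (x.natAbs : ℤ) ≤ (i : ℤ) := by exact_mod_cast this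
      have hb := Int.le_natAbs (a := x)
      push_cast at hi
      omega
    have hIio := lower_eq_Iio hfin hlow
    set A := S.ncard with hA
    have hmemS : ∀ i : ℕ, i ∈ S ↔ i < A := by
      intro i; rw [hIio]; rfl
    have hxA : 0 ≤ x + A := by
      by_contra hcon
      push_neg at hcon
      -- then -x > A ≥ 0; show Iio (-x).toNat ⊆ S
      have hsub : Set.Iio (-x).toNat ⊆ S := by
        intro i hi
        simp only [Set.mem_Iio] at hi
        have h1 : (i : ℤ) < -x := by
          have h2 : ((-x).toNat : ℤ) = -x := Int.toNat_of_nonneg (by omega)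
          have h3 : (i:ℤ) < ((-x).toNat : ℤ) := by exact_mod_cast hi
          omega
        simp only [hSdef, Set.mem_setOf_eq]
        have h2 : x ≤ (l i : ℤ) - 1 - i := by
          have : (0:ℤ) ≤ l i := Int.ofNat_nonneg _
          omega
        exact lt_of_le_of_ne h2 (hne i)
      have hle := Set.ncard_le_ncard hsub hfin
      rw [ncard_Iio_nat] at hle
      have : ((-x).toNat : ℤ) = -x := Int.toNat_of_nonneg (by omega)
      omega
    set j := (x + A).toNat with hj
    have hjx : (j : ℤ) = x + A := Int.toNat_of_nonneg hxA
    have hset : {i : ℕ | j < l i} = S := by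
      ext i
      simp only [Set.mem_setOf_eq]
      constructor
      · intro hli
        by_contra hiS
        have hiA : A ≤ i := by
          by_contra hlt
          push_neg at hlt
          exact hiS ((hmemS i).2 hlt)
        have hAS : ¬ ((A:ℕ) ∈ S) := by
          intro h; rw [hmemS] at h; omega
        simp only [hSdef, Set.mem_setOf_eq, not_lt] at hAS
        have hAne := hne A
        have h4 : (j:ℤ) + 1 ≤ (l i : ℤ) := by exact_mod_cast hli
        have h5 : (l i : ℤ) ≤ (l A : ℤ) := by exact_mod_cast hl.1 hiA
        omega
      · intro hiS
        -- i < A; use A-1 ∈ S and the step bound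
        have hiA : i < A := (hmemS i).1 hiS
        have hA1 : (A - 1 : ℕ) ∈ S := (hmemS _).2 (by omega)
        simp only [hSdef, Set.mem_setOf_eq] at hA1
        have hstep := fanti2 hl (show i ≤ A - 1 by omega)
        have hcast : ((A - 1 : ℕ) : ℤ) = (A : ℤ) - 1 := by
          have : 1 ≤ A := by omega
          push_cast [this]
          omega
        rw [hcast] at hA1 hstep
        have : (j:ℤ) < (l i : ℤ) := by omega
        exact_mod_cast this
    have hconj : conj l j = A := by rw [conj, hset, hIio, ncard_Iio_nat]
    exact ⟨j, by rw [hconj]; omega⟩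
  · rintro ⟨j, rfl⟩ ⟨u, hu⟩
    by_cases h : u < conj l j
    · have h1 : j < l u := (adj hl).1 h
      have h2 : (u:ℤ) + 1 ≤ (conj l j : ℤ) := by exact_mod_cast h
      have h3 : (j:ℤ) + 1 ≤ (l u : ℤ) := by exact_mod_cast h1
      omega
    · push_neg at h
      have h1 : ¬ (j < l u) := fun hlt => h.not_gt ((adj hl).2 hlt)
      push_neg at h1
      have h2 : (conj l j : ℤ) ≤ (u:ℤ) := by exact_mod_cast h
      have h3 : (l u : ℤ) ≤ (j : ℤ) := by exact_mod_cast h1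
      omega



/-! ### boxes and pairs -/

noncomputable def toPair (l : ℕ → ℕ) : ℕ × ℕ → ℤ × ℤ :=
  fun p => ((l p.1 : ℤ) - 1 - p.1, (p.2 : ℤ) - conj l p.2)

lemma toPair_inj (hl : IsPartition l) : Function.Injective (toPair l) := by
  intro p q h
  have h1 := congrArg Prod.fst h
  have h2 := congrArg Prod.snd h
  simp only [toPair] at h1 h2
  have e1 : p.1 = q.1 := (fmono hl).injective h1
  have e2 : p.2 = q.2 := (gmono hl).injective h2
  exact Prod.ext e1 e2

lemma mem_beta (l : ℕ → ℕ) (i : ℕ) : ((l i : ℤ) - 1 - i) ∈ beta l := ⟨i, rfl⟩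

lemma gap_mem (hl : IsPartition l) (j : ℕ) : ((j : ℤ) - conj l j) ∉ beta l :=
  (gap_iff hl _).2 ⟨j, rfl⟩

lemma box_adj (hl : IsPartition l) {i j : ℕ} (h : j < l i) : i < conj l j := (adj hl).2 h

lemma toPair_image (hl : IsPartition l) :
    toPair l '' {p : ℕ × ℕ | p.2 < l p.1} = Pairs (beta l) := by
  ext q
  constructor
  · rintro ⟨⟨i, j⟩, hbox, rfl⟩
    simp only [Set.mem_setOf_eq] at hbox
    refine ⟨mem_beta l i, gap_mem hl j, ?_⟩
    have h1 : (j:ℤ) + 1 ≤ l i := by exact_mod_cast hbox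
    have h2 : (i:ℤ) + 1 ≤ conj l j := by exact_mod_cast box_adj hl hbox
    simp only [toPair]
    omega
  · rintro ⟨hb, hc, hlt⟩
    obtain ⟨i, hi⟩ := hb
    obtain ⟨j, hj⟩ := (gap_iff hl _).1 hc
    have hbox : j < l i := by
      by_contra h
      push_neg at h
      have h1 : ¬ (i < conj l j) := fun hh => absurd ((adj hl).1 hh) (by omega)
      push_neg at h1
      have h2 : (l i : ℤ) ≤ j := by exact_mod_cast h
      have h3 : (conj l j : ℤ) ≤ i := by exact_mod_cast h1
      rw [hi, hj] at hlt
      omega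
    exact ⟨(i, j), hbox, by simp only [toPair]; rw [← hi, ← hj]⟩

lemma hook_eq (hl : IsPartition l) {i j : ℕ} (h : j < l i) :
    (hookLen l i j : ℤ) = ((l i : ℤ) - 1 - i) - ((j : ℤ) - conj l j) := by
  have h1 : j + 1 ≤ l i := h
  have h2 : i + 1 ≤ conj l j := box_adj hl h
  rw [hookLen]
  push_cast [h1, h2]
  ring

lemma psize_eq (hl : IsPartition l) : psize l = (Pairs (beta l)).ncard := by
  rw [psize, ← toPair_image hl, Set.ncard_image_of_injOn (toPair_inj hl).injOn]

lemma dp_odd_eq (hl : IsPartition l) :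
    {p : ℕ × ℕ | p.2 < l p.1 ∧ Odd (hookLen l p.1 p.2)}.ncard
      = {q ∈ Pairs (beta l) | Odd (q.1 - q.2)}.ncard := by
  have himg : toPair l '' {p : ℕ × ℕ | p.2 < l p.1 ∧ Odd (hookLen l p.1 p.2)}
      = {q ∈ Pairs (beta l) | Odd (q.1 - q.2)} := by
    ext q
    constructor
    · rintro ⟨⟨i, j⟩, ⟨hbox, hodd⟩, rfl⟩
      refine ⟨?_, ?_⟩
      · rw [← toPair_image hl]; exact ⟨(i,j), hbox, rfl⟩
      · have := hook_eq hl hbox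
        simp only [toPair]
        rw [← this]
        exact_mod_cast hodd
    · rintro ⟨hq, hodd⟩
      rw [← toPair_image hl] at hq
      obtain ⟨⟨i, j⟩, hbox, rfl⟩ := hq
      simp only [Set.mem_setOf_eq] at hbox
      refine ⟨(i, j), ⟨hbox, ?_⟩, rfl⟩
      have := hook_eq hl hbox
      simp only [toPair] at hodd
      rw [← this] at hodd
      exact_mod_cast hodd
  rw [← himg, Set.ncard_image_of_injOn (toPair_inj hl).injOn]

lemma dp_even_eq (hl : IsPartition l) :
    {p : ℕ × ℕ | p.2 < l p.1 ∧ Even (hookLen l p.1 p.2)}.ncard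
      = {q ∈ Pairs (beta l) | Even (q.1 - q.2)}.ncard := by
  have himg : toPair l '' {p : ℕ × ℕ | p.2 < l p.1 ∧ Even (hookLen l p.1 p.2)}
      = {q ∈ Pairs (beta l) | Even (q.1 - q.2)} := by
    ext q
    constructor
    · rintro ⟨⟨i, j⟩, ⟨hbox, hodd⟩, rfl⟩
      refine ⟨?_, ?_⟩
      · rw [← toPair_image hl]; exact ⟨(i,j), hbox, rfl⟩
      · have := hook_eq hl hbox
        simp only [toPair]
        rw [← this]
        exact_mod_cast hodd
    · rintro ⟨hq, hodd⟩
      rw [← toPair_image hl] at hq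
      obtain ⟨⟨i, j⟩, hbox, rfl⟩ := hq
      simp only [Set.mem_setOf_eq] at hbox
      refine ⟨(i, j), ⟨hbox, ?_⟩, rfl⟩
      have := hook_eq hl hbox
      simp only [toPair] at hodd
      rw [← this] at hodd
      exact_mod_cast hodd
  rw [← himg, Set.ncard_image_of_injOn (toPair_inj hl).injOn]

/-! ### Maya and charge of beta -/

lemma maya_beta (hl : IsPartition l) : Maya (beta l) := by
  obtain ⟨N, hN⟩ := hl.2
  constructor
  · refine ⟨-(N:ℤ) - 1, ?_⟩
    intro x hx
    have hpos : 0 < -1 - x := by omega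
    set i := (-1 - x).toNat with hi
    have hic : (i : ℤ) = -1 - x := Int.toNat_of_nonneg (by omega)
    have hiN : N ≤ i := by omega
    have hli : l i = 0 := Nat.le_zero.1 (hN ▸ hl.1 hiN)
    exact ⟨i, by rw [hli]; push_cast; omega⟩
  · refine ⟨(l 0 : ℤ), ?_⟩
    rintro x hx ⟨i, rfl⟩
    have h1 : l i ≤ l 0 := hl.1 (Nat.zero_le i)
    have h2 : (l i : ℤ) ≤ l 0 := by exact_mod_cast h1
    omega

lemma charge_beta (hl : IsPartition l) : charge (beta l) = 0 := by
  have e1 : beta l ∩ Set.Ici 0 = (fun i : ℕ => (l i : ℤ) - 1 - i) '' {i | i < l i} := by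
    ext x
    constructor
    · rintro ⟨⟨i, rfl⟩, hx⟩
      simp only [Set.mem_Ici] at hx
      refine ⟨i, ?_, rfl⟩
      simp only [Set.mem_setOf_eq]
      have : (i:ℤ) + 1 ≤ l i := by omega
      exact_mod_cast this
    · rintro ⟨i, hi, rfl⟩
      simp only [Set.mem_setOf_eq] at hi
      have : (i:ℤ) + 1 ≤ l i := by exact_mod_cast hi
      exact ⟨⟨i, rfl⟩, by simp only [Set.mem_Ici]; omega⟩
  have e2 : Set.Iio 0 \ beta l = (fun j : ℕ => (j : ℤ) - conj l j) '' {j | j < conj l j} := by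
    ext x
    constructor
    · rintro ⟨hx, hnb⟩
      simp only [Set.mem_Iio] at hx
      obtain ⟨j, rfl⟩ := (gap_iff hl _).1 hnb
      refine ⟨j, ?_, rfl⟩
      simp only [Set.mem_setOf_eq]
      have : (j:ℤ) < conj l j := by omega
      exact_mod_cast this
    · rintro ⟨j, hj, rfl⟩
      simp only [Set.mem_setOf_eq] at hj
      have : (j:ℤ) < conj l j := by exact_mod_cast hj
      exact ⟨by simp only [Set.mem_Iio]; omega, gap_mem hl j⟩
  have i1 : Set.InjOn (fun i : ℕ => (l i : ℤ) - 1 - i) {i | i < l i} :=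
    ((fmono hl).injective).injOn
  have i2 : Set.InjOn (fun j : ℕ => (j : ℤ) - conj l j) {j | j < conj l j} :=
    ((gmono hl).injective).injOn
  have e3 : {i : ℕ | i < l i} = {j : ℕ | j < conj l j} := by
    ext i
    simp only [Set.mem_setOf_eq]
    exact (adj hl).symm
  rw [charge, e1, e2, Set.ncard_image_of_injOn i1, Set.ncard_image_of_injOn i2, e3]
  ring

lemma beta_conj (hl : IsPartition l) : beta (conj l) = {x | (-1 - x) ∉ beta l} := by
  ext x
  constructor
  · rintro ⟨j, hj⟩
    show (-1 - x) ∉ beta l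
    rw [gap_iff hl]
    exact ⟨j, by omega⟩
  · intro h
    rw [Set.mem_setOf_eq, gap_iff hl] at h
    obtain ⟨j, hj⟩ := h
    exact ⟨j, by omega⟩

lemma hook_pos (l : ℕ → ℕ) (i j : ℕ) : 0 < hookLen l i j := by
  rw [hookLen]; omega

lemma isCore_zero (l : ℕ → ℕ) : IsCore l 0 := by
  intro i j hbox hdvd
  have := hook_pos l i j
  omega

lemma core_iff (hl : IsPartition l) {t : ℕ} (ht : 0 < t) :
    IsCore l t ↔ ∀ x ∈ beta l, x - (t:ℤ) ∈ beta l := by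
  constructor
  · intro hcore x hx
    by_contra hnx
    have hq : ((x - t, x - (t:ℤ)) : ℤ × ℤ).1 ∈ beta l → False := fun h => hnx h
    -- the pair (x, x - t) is in Pairs (beta l)
    have hp : (x, x - (t:ℤ)) ∈ Pairs (beta l) := ⟨hx, hnx, by omega⟩
    rw [← toPair_image hl] at hp
    obtain ⟨⟨i, j⟩, hbox, hpq⟩ := hp
    simp only [Set.mem_setOf_eq] at hbox
    have h1 := congrArg Prod.fst hpq
    have h2 := congrArg Prod.snd hpq
    simp only [toPair] at h1 h2
    have hh := hook_eq hl hbox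
    rw [h1, h2] at hh
    have : (hookLen l i j : ℤ) = t := by omega
    have ht' : hookLen l i j = t := by exact_mod_cast this
    exact hcore i j hbox (ht' ▸ dvd_refl t)
  · intro hclose i j hbox hdvd
    obtain ⟨q, hq⟩ := hdvd
    have hqpos : 0 < q := by
      rcases Nat.eq_zero_or_pos q with h | h
      · exfalso; rw [h, Nat.mul_zero] at hq; have := hook_pos l i j; omega
      · exact h
    have hiter : ∀ r : ℕ, ((l i : ℤ) - 1 - i) - t * r ∈ beta l := by
      intro r
      induction r with
      | zero => simpa using mem_beta l i
      | succ r ih =>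
        have h2 := hclose _ ih
        have e : ((l i : ℤ) - 1 - i) - (t:ℤ) * ((r+1 : ℕ) : ℤ) = (((l i : ℤ) - 1 - i) - (t:ℤ) * (r:ℤ)) - (t:ℤ) := by
          push_cast; ring
        rw [e]
        exact h2
    have hgap : ((j:ℤ) - conj l j) ∈ beta l := by
      have hh := hook_eq hl hbox
      rw [hq] at hh
      push_cast at hh
      have e : ((j:ℤ) - conj l j) = ((l i : ℤ) - 1 - i) - (t:ℤ) * (q:ℤ) := by linarith
      rw [e]
      have := hiter q
      push_cast at this
      exact this
    exact gap_mem hl j hgap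



/-! ### finiteness helpers -/

lemma ncard_Ico_int (a b : ℤ) : (Set.Ico a b).ncard = (b - a).toNat := by
  rw [← Finset.coe_Ico, Set.ncard_coe_finset, Int.card_Ico]

lemma maya_fin_above {X : Set ℤ} (hX : Maya X) (a : ℤ) : {v | v ∈ X ∧ a ≤ v}.Finite := by
  obtain ⟨N2, h2⟩ := hX.2
  apply Set.Finite.subset (Set.finite_Icc a N2)
  rintro v ⟨hv, hav⟩
  have : ¬ (N2 < v) := fun h => h2 v h hv
  exact ⟨hav, by omega⟩

lemma fin_gt {X : Set ℤ} (hX : Maya X) (a : ℤ) : {v | v ∈ X ∧ a < v}.Finite :=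
  (maya_fin_above hX (a+1)).subset (by rintro v ⟨hv, h⟩; exact ⟨hv, by omega⟩)

lemma maya_fin_gaps {X : Set ℤ} (hX : Maya X) (a : ℤ) : {v | v ∉ X ∧ v < a}.Finite := by
  obtain ⟨N1, h1⟩ := hX.1
  apply Set.Finite.subset (Set.finite_Icc N1 a)
  rintro v ⟨hv, hav⟩
  have : ¬ (v < N1) := fun h => hv (h1 v h)
  exact ⟨by omega, by omega⟩

lemma maya_fin_gaps' {X : Set ℤ} (hX : Maya X) (a : ℤ) : {v | v ∉ X ∧ v ≤ a}.Finite :=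
  (maya_fin_gaps hX (a+1)).subset (by rintro v ⟨hv, h⟩; exact ⟨hv, by omega⟩)

lemma maya_nonempty {X : Set ℤ} (hX : Maya X) : X.Nonempty := by
  obtain ⟨N1, h1⟩ := hX.1
  exact ⟨N1 - 1, h1 _ (by omega)⟩

/-! ### the key counting lemma -/

lemma cnt {X : Set ℤ} (hX : Maya X) {x : ℤ} (hx : x ∈ X) :
    ({c | c ∉ X ∧ c < x}.ncard : ℤ) = x + 1 + ({y | y ∈ X ∧ x < y}.ncard : ℤ) - charge X := by
  have hfinA : (X ∩ Set.Ici 0).Finite := by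
    apply (maya_fin_above hX 0).subset
    rintro v ⟨hv, h⟩; exact ⟨hv, h⟩
  have hfinB : (Set.Iio 0 \ X).Finite := by
    apply (maya_fin_gaps hX 0).subset
    rintro v ⟨h, hv⟩; exact ⟨hv, h⟩
  have hins : {y | y ∈ X ∧ x ≤ y} = insert x {y | y ∈ X ∧ x < y} := by
    ext y
    simp only [Set.mem_setOf_eq, Set.mem_insert_iff]
    constructor
    · rintro ⟨hy, hxy⟩
      rcases eq_or_lt_of_le hxy with h | h
      · exact Or.inl h.symm
      · exact Or.inr ⟨hy, h⟩
    · rintro (rfl | ⟨hy, hxy⟩)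
      · exact ⟨hx, le_rfl⟩
      · exact ⟨hy, le_of_lt hxy⟩
  have hcard_ins : {y | y ∈ X ∧ x ≤ y}.ncard = {y | y ∈ X ∧ x < y}.ncard + 1 := by
    rw [hins, Set.ncard_insert_of_notMem (by simp) (fin_gt hX x)]
  rcases le_or_gt 0 x with hx0 | hx0
  · -- x ≥ 0
    have eq1 : {c | c ∉ X ∧ c < x} = (Set.Iio 0 \ X) ∪ {c | 0 ≤ c ∧ c < x ∧ c ∉ X} := by
      ext c
      simp only [Set.mem_setOf_eq, Set.mem_union, Set.mem_diff, Set.mem_Iio]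
      by_cases hc : c ∈ X <;> simp [hc] <;> omega
    have eq2 : Set.Ico (0:ℤ) x = {c | 0 ≤ c ∧ c < x ∧ c ∈ X} ∪ {c | 0 ≤ c ∧ c < x ∧ c ∉ X} := by
      ext c
      simp only [Set.mem_Ico, Set.mem_union, Set.mem_setOf_eq]
      by_cases hc : c ∈ X <;> simp [hc]
    have eq3 : X ∩ Set.Ici 0 = {c | 0 ≤ c ∧ c < x ∧ c ∈ X} ∪ {y | y ∈ X ∧ x ≤ y} := by
      ext c
      simp only [Set.mem_inter_iff, Set.mem_Ici, Set.mem_union, Set.mem_setOf_eq]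
      by_cases hc : c ∈ X <;> simp [hc] <;> omega
    have d1 : Disjoint (Set.Iio 0 \ X) {c | 0 ≤ c ∧ c < x ∧ c ∉ X} := by
      rw [Set.disjoint_left]
      rintro c ⟨hc1, _⟩ ⟨hc2, _⟩
      simp only [Set.mem_Iio] at hc1
      omega
    have d2 : Disjoint {c | 0 ≤ c ∧ c < x ∧ c ∈ X} {c | 0 ≤ c ∧ c < x ∧ c ∉ X} := by
      rw [Set.disjoint_left]
      rintro c ⟨_, _, hc⟩ ⟨_, _, hc'⟩
      exact hc' hc
    have d3 : Disjoint {c | 0 ≤ c ∧ c < x ∧ c ∈ X} {y | y ∈ X ∧ x ≤ y} := by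
      rw [Set.disjoint_left]
      rintro c ⟨_, hcx, _⟩ ⟨_, hxc⟩
      omega
    have f1 : {c : ℤ | 0 ≤ c ∧ c < x ∧ c ∉ X}.Finite :=
      (Set.finite_Icc 0 x).subset (by rintro c ⟨h1, h2, _⟩; exact ⟨h1, by omega⟩)
    have f2 : {c : ℤ | 0 ≤ c ∧ c < x ∧ c ∈ X}.Finite :=
      (Set.finite_Icc 0 x).subset (by rintro c ⟨h1, h2, _⟩; exact ⟨h1, by omega⟩)
    have f3 : {y : ℤ | y ∈ X ∧ x ≤ y}.Finite := maya_fin_above hX x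
    have n1 := Set.ncard_union_eq d1 hfinB f1
    have n2 := Set.ncard_union_eq d2 f2 f1
    have n3 := Set.ncard_union_eq d3 f2 f3
    rw [← eq1] at n1
    rw [← eq2, ncard_Ico_int] at n2
    rw [← eq3] at n3
    have hxt : ((x - 0).toNat : ℤ) = x := by omega
    rw [charge]
    omega
  · -- x < 0
    have eq1 : Set.Iio 0 \ X = {c | c ∉ X ∧ c < x} ∪ {c | x ≤ c ∧ c < 0 ∧ c ∉ X} := by
      ext c
      simp only [Set.mem_setOf_eq, Set.mem_union, Set.mem_diff, Set.mem_Iio]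
      by_cases hc : c ∈ X <;> simp [hc] <;> omega
    have eq2 : Set.Ico x 0 = {c | x ≤ c ∧ c < 0 ∧ c ∈ X} ∪ {c | x ≤ c ∧ c < 0 ∧ c ∉ X} := by
      ext c
      simp only [Set.mem_Ico, Set.mem_union, Set.mem_setOf_eq]
      by_cases hc : c ∈ X <;> simp [hc]
    have eq3 : {y | y ∈ X ∧ x ≤ y} = {c | x ≤ c ∧ c < 0 ∧ c ∈ X} ∪ (X ∩ Set.Ici 0) := by
      ext c
      simp only [Set.mem_setOf_eq, Set.mem_union, Set.mem_inter_iff, Set.mem_Ici]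
      by_cases hc : c ∈ X <;> simp [hc] <;> omega
    have d1 : Disjoint {c | c ∉ X ∧ c < x} {c | x ≤ c ∧ c < 0 ∧ c ∉ X} := by
      rw [Set.disjoint_left]
      rintro c ⟨_, hc1⟩ ⟨hc2, _⟩
      omega
    have d2 : Disjoint {c | x ≤ c ∧ c < 0 ∧ c ∈ X} {c | x ≤ c ∧ c < 0 ∧ c ∉ X} := by
      rw [Set.disjoint_left]
      rintro c ⟨_, _, hc⟩ ⟨_, _, hc'⟩
      exact hc' hc
    have d3 : Disjoint {c | x ≤ c ∧ c < 0 ∧ c ∈ X} (X ∩ Set.Ici 0) := by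
      rw [Set.disjoint_left]
      rintro c ⟨_, hc, _⟩ ⟨_, hc'⟩
      simp only [Set.mem_Ici] at hc'
      omega
    have f0 : {c : ℤ | c ∉ X ∧ c < x}.Finite := maya_fin_gaps hX x
    have f1 : {c : ℤ | x ≤ c ∧ c < 0 ∧ c ∉ X}.Finite :=
      (Set.finite_Icc x 0).subset (by rintro c ⟨h1, h2, _⟩; exact ⟨h1, by omega⟩)
    have f2 : {c : ℤ | x ≤ c ∧ c < 0 ∧ c ∈ X}.Finite :=
      (Set.finite_Icc x 0).subset (by rintro c ⟨h1, h2, _⟩; exact ⟨h1, by omega⟩)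
    have n1 := Set.ncard_union_eq d1 f0 f1
    have n2 := Set.ncard_union_eq d2 f2 f1
    have n3 := Set.ncard_union_eq d3 f2 hfinA
    rw [← eq1] at n1
    rw [← eq2, ncard_Ico_int] at n2
    rw [← eq3] at n3
    have hxt : ((0 - x).toNat : ℤ) = -x := by omega
    rw [charge]
    omega

/-! ### partOf -/

noncomputable def partOf (X : Set ℤ) : ℕ → ℕ :=
  fun i => {c : ℤ | c ∉ X ∧ i < ({y | y ∈ X ∧ c < y}).ncard}.ncard

lemma exists_rank {X : Set ℤ} (hX : Maya X) : ∀ i : ℕ, ∃ x ∈ X, {y | y ∈ X ∧ x < y}.ncard = i := by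
  obtain ⟨N1, h1⟩ := hX.1
  obtain ⟨N2, h2⟩ := hX.2
  intro i
  induction i with
  | zero =>
    obtain ⟨g, hg, hmax⟩ := Int.exists_greatest_of_bdd
      ⟨N2, fun z hz => by by_contra h; push_neg at h; exact h2 z h hz⟩ (maya_nonempty hX)
    refine ⟨g, hg, ?_⟩
    have : {y | y ∈ X ∧ g < y} = ∅ := by
      ext y
      simp only [Set.mem_setOf_eq, Set.mem_empty_iff_false, iff_false, not_and, not_lt]
      exact fun hy => hmax y hy
    rw [this, Set.ncard_empty]
  | succ i ih =>
    obtain ⟨x, hx, hcard⟩ := ih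
    have hbdd : ∀ z, (z ∈ X ∧ z < x) → z ≤ x - 1 := fun z hz => by omega
    have hne : ∃ z, z ∈ X ∧ z < x := by
      refine ⟨min N1 x - 1, h1 _ (by omega), by omega⟩
    obtain ⟨g, ⟨hgX, hgx⟩, hmax⟩ := Int.exists_greatest_of_bdd ⟨x - 1, hbdd⟩ hne
    refine ⟨g, hgX, ?_⟩
    have heq : {y | y ∈ X ∧ g < y} = insert x {y | y ∈ X ∧ x < y} := by
      ext y
      simp only [Set.mem_setOf_eq, Set.mem_insert_iff]
      constructor
      · rintro ⟨hy, hgy⟩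
        rcases lt_trichotomy y x with h | h | h
        · exfalso
          have := hmax y ⟨hy, h⟩
          omega
        · exact Or.inl h
        · exact Or.inr ⟨hy, h⟩
      · rintro (rfl | ⟨hy, hxy⟩)
        · exact ⟨hx, hgx⟩
        · exact ⟨hy, by omega⟩
    rw [heq, Set.ncard_insert_of_notMem (by simp) (fin_gt hX x), hcard]

lemma partOf_rank {X : Set ℤ} (hX : Maya X) (hchg : charge X = 0) {x : ℤ} (hx : x ∈ X) :
    (partOf X ({y | y ∈ X ∧ x < y}).ncard : ℤ) = x + 1 + ({y | y ∈ X ∧ x < y}).ncard := by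
  set i := ({y | y ∈ X ∧ x < y}).ncard with hi
  have heq : {c : ℤ | c ∉ X ∧ i < ({y | y ∈ X ∧ c < y}).ncard} = {c | c ∉ X ∧ c < x} := by
    ext c
    simp only [Set.mem_setOf_eq]
    constructor
    · rintro ⟨hc, hcard⟩
      refine ⟨hc, ?_⟩
      by_contra h
      push_neg at h
      have hxc : x < c := lt_of_le_of_ne h (fun hh => hc (hh ▸ hx))
      have hsub : {y | y ∈ X ∧ c < y} ⊆ {y | y ∈ X ∧ x < y} := by
        rintro y ⟨hy, hcy⟩; exact ⟨hy, by omega⟩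
      have := Set.ncard_le_ncard hsub (fin_gt hX x)
      omega
    · rintro ⟨hc, hcx⟩
      refine ⟨hc, ?_⟩
      have hsub : insert x {y | y ∈ X ∧ x < y} ⊆ {y | y ∈ X ∧ c < y} := by
        rintro y (rfl | ⟨hy, hxy⟩)
        · exact ⟨hx, hcx⟩
        · exact ⟨hy, by omega⟩
      have h1 := Set.ncard_le_ncard hsub (fin_gt hX c)
      rw [Set.ncard_insert_of_notMem (by simp) (fin_gt hX x)] at h1
      omega
  rw [partOf, heq, cnt hX hx, hchg]
  push_cast
  ring

lemma partOf_partition {X : Set ℤ} (hX : Maya X) : IsPartition (partOf X) := by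
  constructor
  · intro i i' hii'
    apply Set.ncard_le_ncard
    · rintro c ⟨hc, hcard⟩
      exact ⟨hc, by omega⟩
    · obtain ⟨N2, h2⟩ := hX.2
      apply (maya_fin_gaps' hX N2).subset
      rintro c ⟨hc, hcard⟩
      refine ⟨hc, ?_⟩
      have hne : {y | y ∈ X ∧ c < y}.Nonempty := by
        apply Set.nonempty_of_ncard_ne_zero
        omega
      obtain ⟨y, hy, hcy⟩ := hne
      have : ¬ (N2 < y) := fun h => h2 y h hy
      omega
  · obtain ⟨N1, h1⟩ := hX.1
    refine ⟨{v | v ∈ X ∧ N1 ≤ v}.ncard, ?_⟩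
    have : {c : ℤ | c ∉ X ∧ {v | v ∈ X ∧ N1 ≤ v}.ncard < ({y | y ∈ X ∧ c < y}).ncard} = ∅ := by
      ext c
      simp only [Set.mem_setOf_eq, Set.mem_empty_iff_false, iff_false, not_and, not_lt]
      intro hc
      apply Set.ncard_le_ncard
      · rintro y ⟨hy, hcy⟩
        refine ⟨hy, ?_⟩
        have : ¬ (c < N1) := fun h => hc (h1 c h)
        omega
      · exact maya_fin_above hX N1
    rw [partOf, this, Set.ncard_empty]

lemma beta_partOf {X : Set ℤ} (hX : Maya X) (hchg : charge X = 0) : beta (partOf X) = X := by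
  ext z
  constructor
  · rintro ⟨i, rfl⟩
    obtain ⟨x, hx, hcard⟩ := exists_rank hX i
    have := partOf_rank hX hchg hx
    rw [hcard] at this
    have : (partOf X i : ℤ) - 1 - i = x := by omega
    rw [this]
    exact hx
  · intro hz
    have h := partOf_rank hX hchg hz
    exact ⟨{y | y ∈ X ∧ z < y}.ncard, by omega⟩

lemma partOf_beta (hl : IsPartition l) : partOf (beta l) = l := by
  funext i
  have hx : ((l i : ℤ) - 1 - i) ∈ beta l := mem_beta l i
  have hrank : {y | y ∈ beta l ∧ ((l i : ℤ) - 1 - i) < y}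
      = (fun i' : ℕ => (l i' : ℤ) - 1 - i') '' Set.Iio i := by
    ext y
    constructor
    · rintro ⟨⟨i', rfl⟩, hy⟩
      refine ⟨i', ?_, rfl⟩
      simp only [Set.mem_Iio]
      exact (fmono hl).lt_iff_gt.1 hy
    · rintro ⟨i', hi', rfl⟩
      simp only [Set.mem_Iio] at hi'
      exact ⟨mem_beta l i', (fmono hl).lt_iff_gt.2 hi'⟩
  have hcard : {y | y ∈ beta l ∧ ((l i : ℤ) - 1 - i) < y}.ncard = i := by
    rw [hrank, Set.ncard_image_of_injOn ((fmono hl).injective).injOn, ncard_Iio_nat]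
  have := partOf_rank (maya_beta hl) (charge_beta hl) hx
  rw [hcard] at this
  have h2 : (partOf (beta l) i : ℤ) = (l i : ℤ) := by omega
  exact_mod_cast h2



/-! ### insert counting machinery -/

def SK (k : ℤ → Prop) (T : Set ℤ) : Set (ℤ × ℤ) := {q | q.1 ∈ T ∧ q.2 ∈ T ∧ k (q.1 + q.2)}

open Classical in
lemma SK_insert_ncard (k : ℤ → Prop) {T : Set ℤ} {x : ℤ} (hx : x ∉ T)
    (hfin : (SK k (insert x T)).Finite) :
    (SK k (insert x T)).ncard =
      (SK k T).ncard + 2 * {v | v ∈ T ∧ k (x + v)}.ncard + (if k (x + x) then 1 else 0) := by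
  classical
  set V := {v | v ∈ T ∧ k (x + v)} with hV
  set A := SK k T with hA
  set B := (fun v => ((x : ℤ), v)) '' V with hB
  set C := (fun v => (v, (x : ℤ))) '' V with hC
  set D := {q : ℤ × ℤ | q = (x, x) ∧ k (x + x)} with hD
  have hdecomp : SK k (insert x T) = A ∪ B ∪ C ∪ D := by
    ext ⟨q1, q2⟩
    simp only [hA, hB, hC, hD, hV, SK, Set.mem_insert_iff, Set.mem_union, Set.mem_setOf_eq,
      Set.mem_image, Prod.mk.injEq]
    constructor
    · rintro ⟨h1 | h1, h2 | h2, hk⟩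
      · subst h1; subst h2; exact Or.inr ⟨⟨rfl, rfl⟩, hk⟩
      · subst h1; exact Or.inl (Or.inl (Or.inr ⟨q2, ⟨h2, hk⟩, rfl, rfl⟩))
      · subst h2; exact Or.inl (Or.inr ⟨q1, ⟨h1, by rwa [add_comm]⟩, rfl, rfl⟩)
      · exact Or.inl (Or.inl (Or.inl ⟨h1, h2, hk⟩))
    · rintro (((⟨h1, h2, hk⟩ | ⟨v, ⟨hv, hk⟩, rfl, rfl⟩) | ⟨v, ⟨hv, hk⟩, rfl, rfl⟩) | ⟨⟨hq1, hq2⟩, hk⟩)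
      · exact ⟨Or.inr h1, Or.inr h2, hk⟩
      · exact ⟨Or.inl rfl, Or.inr hv, hk⟩
      · exact ⟨Or.inr hv, Or.inl rfl, by rwa [add_comm]⟩
      · exact ⟨Or.inl hq1, Or.inl hq2, by rw [hq1, hq2]; exact hk⟩
  have hsub : A ∪ B ∪ C ∪ D ⊆ SK k (insert x T) := by rw [hdecomp]
  have hfA : A.Finite := hfin.subset (fun q hq => hsub (by left; left; left; exact hq))
  have hfB : B.Finite := hfin.subset (fun q hq => hsub (by left; left; right; exact hq))
  have hfC : C.Finite := hfin.subset (fun q hq => hsub (by left; right; exact hq))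
  have hfD : D.Finite := hfin.subset (fun q hq => hsub (by right; exact hq))
  have hinjB : Set.InjOn (fun v => ((x : ℤ), v)) V := by
    intro a _ b _ h
    simpa using h
  have hinjC : Set.InjOn (fun v => (v, (x : ℤ))) V := by
    intro a _ b _ h
    simpa using h
  have hAmem : ∀ q ∈ A, q.1 ∈ T ∧ q.2 ∈ T := fun q hq => ⟨hq.1, hq.2.1⟩
  have hBmem : ∀ q ∈ B, q.1 = x ∧ q.2 ∈ T := by
    rintro q ⟨v, hv, rfl⟩
    exact ⟨rfl, hv.1⟩
  have hCmem : ∀ q ∈ C, q.2 = x ∧ q.1 ∈ T := by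
    rintro q ⟨v, hv, rfl⟩
    exact ⟨rfl, hv.1⟩
  have hDmem : ∀ q ∈ D, q.1 = x ∧ q.2 = x := by
    rintro q ⟨hq, _⟩
    rw [hq]
    exact ⟨rfl, rfl⟩
  have dAB : Disjoint A B := by
    rw [Set.disjoint_left]
    intro q hqa hqb
    exact hx ((hBmem q hqb).1 ▸ (hAmem q hqa).1)
  have dABC : Disjoint (A ∪ B) C := by
    rw [Set.disjoint_left]
    intro q hq hqc
    rcases hq with hqa | hqb
    · exact hx ((hCmem q hqc).1 ▸ (hAmem q hqa).2)
    · exact hx ((hBmem q hqb).1 ▸ (hCmem q hqc).2)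
  have dABCD : Disjoint (A ∪ B ∪ C) D := by
    rw [Set.disjoint_left]
    intro q hq hqd
    rcases hq with (hqa | hqb) | hqc
    · exact hx ((hDmem q hqd).1 ▸ (hAmem q hqa).1)
    · exact hx ((hDmem q hqd).2 ▸ (hBmem q hqb).2)
    · exact hx ((hDmem q hqd).1 ▸ (hCmem q hqc).2)
  rw [hdecomp, Set.ncard_union_eq dABCD (hfA.union hfB |>.union hfC) hfD,
    Set.ncard_union_eq dABC (hfA.union hfB) hfC, Set.ncard_union_eq dAB hfA hfB]
  have hBcard : B.ncard = V.ncard := Set.ncard_image_of_injOn hinjB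
  have hCcard : C.ncard = V.ncard := Set.ncard_image_of_injOn hinjC
  have hDcard : D.ncard = (if k (x + x) then 1 else 0) := by
    by_cases hk : k (x + x)
    · have : D = {((x : ℤ), (x : ℤ))} := by
        ext q
        simp only [hD, Set.mem_setOf_eq, Set.mem_singleton_iff]
        exact ⟨fun h => h.1, fun h => ⟨h, hk⟩⟩
      rw [this, Set.ncard_singleton, if_pos hk]
    · have : D = ∅ := by
        ext q
        simp only [hD, Set.mem_setOf_eq, Set.mem_empty_iff_false, iff_false, not_and]
        exact fun _ => hk
      rw [this, Set.ncard_empty, if_neg hk]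
  rw [hBcard, hCcard, hDcard]
  ring


lemma SK_insert_ncard_pos (k : ℤ → Prop) {T : Set ℤ} {x : ℤ} (hx : x ∉ T)
    (hfin : (SK k (insert x T)).Finite) (hk : k (x + x)) :
    (SK k (insert x T)).ncard = (SK k T).ncard + 2 * {v | v ∈ T ∧ k (x + v)}.ncard + 1 := by
  classical
  rw [SK_insert_ncard k hx hfin, if_pos hk]

lemma SK_insert_ncard_neg (k : ℤ → Prop) {T : Set ℤ} {x : ℤ} (hx : x ∉ T)
    (hfin : (SK k (insert x T)).Finite) (hk : ¬ k (x + x)) :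
    (SK k (insert x T)).ncard = (SK k T).ncard + 2 * {v | v ∈ T ∧ k (x + v)}.ncard := by
  classical
  rw [SK_insert_ncard k hx hfin, if_neg hk, add_zero]

lemma PP_insert_left_ncard {S C : Set ℤ} {x : ℤ} (hx : x ∉ S)
    (hfin : (PP (insert x S) C).Finite) :
    (PP (insert x S) C).ncard = (PP S C).ncard + {c | c ∈ C ∧ c < x}.ncard := by
  have hdecomp : PP (insert x S) C = PP S C ∪ (fun c => ((x : ℤ), c)) '' {c | c ∈ C ∧ c < x} := by
    ext ⟨q1, q2⟩
    simp only [PP, Set.mem_insert_iff, Set.mem_union, Set.mem_setOf_eq, Set.mem_image,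
      Prod.mk.injEq]
    constructor
    · rintro ⟨h1 | h1, h2, hlt⟩
      · subst h1; exact Or.inr ⟨q2, ⟨h2, hlt⟩, rfl, rfl⟩
      · exact Or.inl ⟨h1, h2, hlt⟩
    · rintro (⟨h1, h2, hlt⟩ | ⟨c, ⟨hc, hcx⟩, rfl, rfl⟩)
      · exact ⟨Or.inr h1, h2, hlt⟩
      · exact ⟨Or.inl rfl, hc, hcx⟩
  have hsub : PP S C ∪ (fun c => ((x : ℤ), c)) '' {c | c ∈ C ∧ c < x} ⊆ PP (insert x S) C := by
    rw [hdecomp]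
  have hf1 : (PP S C).Finite := hfin.subset (fun q hq => hsub (Or.inl hq))
  have hf2 : ((fun c => ((x : ℤ), c)) '' {c | c ∈ C ∧ c < x}).Finite :=
    hfin.subset (fun q hq => hsub (Or.inr hq))
  have hd : Disjoint (PP S C) ((fun c => ((x : ℤ), c)) '' {c | c ∈ C ∧ c < x}) := by
    rw [Set.disjoint_left]
    rintro q ⟨h1, _, _⟩ ⟨c, hc, rfl⟩
    exact hx h1
  rw [hdecomp, Set.ncard_union_eq hd hf1 hf2,
    Set.ncard_image_of_injOn (by intro a _ b _ h; simpa using h)]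

lemma PP_insert_right_ncard {S C : Set ℤ} {x : ℤ} (hx : x ∉ C)
    (hfin : (PP S (insert x C)).Finite) :
    (PP S (insert x C)).ncard = (PP S C).ncard + {b | b ∈ S ∧ x < b}.ncard := by
  have hdecomp : PP S (insert x C) = PP S C ∪ (fun b => (b, (x : ℤ))) '' {b | b ∈ S ∧ x < b} := by
    ext ⟨q1, q2⟩
    simp only [PP, Set.mem_insert_iff, Set.mem_union, Set.mem_setOf_eq, Set.mem_image,
      Prod.mk.injEq]
    constructor
    · rintro ⟨h1, h2 | h2, hlt⟩
      · subst h2; exact Or.inr ⟨q1, ⟨h1, hlt⟩, rfl, rfl⟩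
      · exact Or.inl ⟨h1, h2, hlt⟩
    · rintro (⟨h1, h2, hlt⟩ | ⟨b, ⟨hb, hxb⟩, rfl, rfl⟩)
      · exact ⟨h1, Or.inr h2, hlt⟩
      · exact ⟨hb, Or.inl rfl, hxb⟩
  have hsub : PP S C ∪ (fun b => (b, (x : ℤ))) '' {b | b ∈ S ∧ x < b} ⊆ PP S (insert x C) := by
    rw [hdecomp]
  have hf1 : (PP S C).Finite := hfin.subset (fun q hq => hsub (Or.inl hq))
  have hf2 : ((fun b => (b, (x : ℤ))) '' {b | b ∈ S ∧ x < b}).Finite :=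
    hfin.subset (fun q hq => hsub (Or.inr hq))
  have hd : Disjoint (PP S C) ((fun b => (b, (x : ℤ))) '' {b | b ∈ S ∧ x < b}) := by
    rw [Set.disjoint_left]
    rintro q ⟨_, h2, _⟩ ⟨b, hb, rfl⟩
    exact hx h2
  rw [hdecomp, Set.ncard_union_eq hd hf1 hf2,
    Set.ncard_image_of_injOn (by intro a _ b _ h; simpa using h)]

open Classical in
lemma ncard_split_ge {S : Set ℤ} {a : ℤ} (hfin : {v | v ∈ S ∧ a ≤ v}.Finite) :
    {v | v ∈ S ∧ a ≤ v}.ncard = {v | v ∈ S ∧ a + 1 ≤ v}.ncard + (if a ∈ S then 1 else 0) := by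
  by_cases ha : a ∈ S
  · have : {v | v ∈ S ∧ a ≤ v} = insert a {v | v ∈ S ∧ a + 1 ≤ v} := by
      ext v
      simp only [Set.mem_setOf_eq, Set.mem_insert_iff]
      constructor
      · rintro ⟨hv, hav⟩
        rcases eq_or_lt_of_le hav with h | h
        · exact Or.inl h.symm
        · exact Or.inr ⟨hv, by omega⟩
      · rintro (rfl | ⟨hv, hav⟩)
        · exact ⟨ha, le_rfl⟩
        · exact ⟨hv, by omega⟩
    rw [this, Set.ncard_insert_of_notMem (by simp) (hfin.subset (by
      rintro v ⟨hv, hav⟩; exact ⟨hv, by omega⟩)), if_pos ha]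
  · have : {v | v ∈ S ∧ a ≤ v} = {v | v ∈ S ∧ a + 1 ≤ v} := by
      ext v
      simp only [Set.mem_setOf_eq]
      constructor
      · rintro ⟨hv, hav⟩
        refine ⟨hv, ?_⟩
        rcases eq_or_lt_of_le hav with h | h
        · exact absurd (h ▸ hv) ha
        · omega
      · rintro ⟨hv, hav⟩
        exact ⟨hv, by omega⟩
    rw [this, if_neg ha, add_zero]

open Classical in
lemma ncard_split_lt {S : Set ℤ} {a : ℤ} (hfin : {v | v ∈ S ∧ v < a + 1}.Finite) :
    {v | v ∈ S ∧ v < a + 1}.ncard = {v | v ∈ S ∧ v < a}.ncard + (if a ∈ S then 1 else 0) := by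
  by_cases ha : a ∈ S
  · have : {v | v ∈ S ∧ v < a + 1} = insert a {v | v ∈ S ∧ v < a} := by
      ext v
      simp only [Set.mem_setOf_eq, Set.mem_insert_iff]
      constructor
      · rintro ⟨hv, hav⟩
        rcases eq_or_lt_of_le (show v ≤ a by omega) with h | h
        · exact Or.inl h
        · exact Or.inr ⟨hv, h⟩
      · rintro (rfl | ⟨hv, hav⟩)
        · exact ⟨ha, by omega⟩
        · exact ⟨hv, by omega⟩
    rw [this, Set.ncard_insert_of_notMem (by simp) (hfin.subset (by
      rintro v ⟨hv, hav⟩; exact ⟨hv, by omega⟩)), if_pos ha]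
  · have : {v | v ∈ S ∧ v < a + 1} = {v | v ∈ S ∧ v < a} := by
      ext v
      simp only [Set.mem_setOf_eq]
      constructor
      · rintro ⟨hv, hav⟩
        refine ⟨hv, ?_⟩
        rcases eq_or_lt_of_le (show v ≤ a by omega) with h | h
        · exact absurd (h ▸ hv) ha
        · omega
      · rintro ⟨hv, hav⟩
        exact ⟨hv, by omega⟩
    rw [this, if_neg ha, add_zero]




lemma ncard_split_ge_mem {S : Set ℤ} {a : ℤ} (hfin : {v | v ∈ S ∧ a ≤ v}.Finite) (ha : a ∈ S) :
    {v | v ∈ S ∧ a ≤ v}.ncard = {v | v ∈ S ∧ a + 1 ≤ v}.ncard + 1 := by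
  classical
  rw [ncard_split_ge hfin, if_pos ha]

lemma ncard_split_ge_not {S : Set ℤ} {a : ℤ} (hfin : {v | v ∈ S ∧ a ≤ v}.Finite) (ha : a ∉ S) :
    {v | v ∈ S ∧ a ≤ v}.ncard = {v | v ∈ S ∧ a + 1 ≤ v}.ncard := by
  classical
  rw [ncard_split_ge hfin, if_neg ha, add_zero]

lemma ncard_split_lt_mem {S : Set ℤ} {a : ℤ} (hfin : {v | v ∈ S ∧ v < a + 1}.Finite) (ha : a ∈ S) :
    {v | v ∈ S ∧ v < a + 1}.ncard = {v | v ∈ S ∧ v < a}.ncard + 1 := by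
  classical
  rw [ncard_split_lt hfin, if_pos ha]

lemma ncard_split_lt_not {S : Set ℤ} {a : ℤ} (hfin : {v | v ∈ S ∧ v < a + 1}.Finite) (ha : a ∉ S) :
    {v | v ∈ S ∧ v < a + 1}.ncard = {v | v ∈ S ∧ v < a}.ncard := by
  classical
  rw [ncard_split_lt hfin, if_neg ha, add_zero]

/-! ### finiteness of pair sets -/

lemma fin_prod_Icc {T : Set (ℤ × ℤ)} {a b : ℤ}
    (h : ∀ q ∈ T, a ≤ q.1 ∧ q.1 ≤ b ∧ a ≤ q.2 ∧ q.2 ≤ b) : T.Finite := by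
  apply Set.Finite.subset ((Set.finite_Icc a b).prod (Set.finite_Icc a b))
  intro q hq
  obtain ⟨h1, h2, h3, h4⟩ := h q hq
  exact ⟨⟨h1, h2⟩, ⟨h3, h4⟩⟩

lemma fin_SKp {Y : Set ℤ} (hY : Maya Y) : (SK (fun s => 0 ≤ s) Y).Finite := by
  obtain ⟨N2, h2⟩ := hY.2
  apply fin_prod_Icc (a := -N2) (b := N2)
  rintro q ⟨hq1, hq2, hk⟩
  have e1 : ¬ (N2 < q.1) := fun h => h2 _ h hq1
  have e2 : ¬ (N2 < q.2) := fun h => h2 _ h hq2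
  constructor
  · omega
  · omega

lemma fin_SKn {Y : Set ℤ} (hY : Maya Y) : (SK (fun s => s < 0) Yᶜ).Finite := by
  obtain ⟨N1, h1⟩ := hY.1
  apply fin_prod_Icc (a := N1) (b := -N1)
  rintro q ⟨hq1, hq2, hk⟩
  have e1 : ¬ (q.1 < N1) := fun h => hq1 (h1 _ h)
  have e2 : ¬ (q.2 < N1) := fun h => hq2 (h1 _ h)
  constructor
  · omega
  · omega

lemma fin_Pairs {X : Set ℤ} (hX : Maya X) : (Pairs X).Finite := by
  obtain ⟨N1, h1⟩ := hX.1
  obtain ⟨N2, h2⟩ := hX.2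
  apply fin_prod_Icc (a := min N1 N2) (b := max N1 N2)
  rintro q ⟨hq1, hq2, hlt⟩
  have e1 : ¬ (N2 < q.1) := fun h => h2 _ h hq1
  have e2 : ¬ (q.2 < N1) := fun h => hq2 (h1 _ h)
  constructor
  · omega
  · constructor
    · omega
    · omega

lemma maya_Iio (a : ℤ) : Maya (Set.Iio a) := by
  constructor
  · exact ⟨a, fun x h => h⟩
  · exact ⟨a, fun x h hx => by simp only [Set.mem_Iio] at hx; omega⟩

/-! ### vacuum computations -/

lemma charge_Iio (e : ℤ) : charge (Set.Iio e) = e := by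
  rcases le_or_gt 0 e with he | he
  · have e1 : Set.Iio e ∩ Set.Ici 0 = Set.Ico 0 e := by
      ext z; simp only [Set.mem_inter_iff, Set.mem_Iio, Set.mem_Ici, Set.mem_Ico]; constructor
      · rintro ⟨h1, h2⟩; exact ⟨h2, h1⟩
      · rintro ⟨h1, h2⟩; exact ⟨h2, h1⟩
    have e2 : Set.Iio 0 \ Set.Iio e = ∅ := by
      ext z; simp only [Set.mem_diff, Set.mem_Iio, Set.mem_empty_iff_false, iff_false, not_and]
      intro h1 h2
      omega
    rw [charge, e1, e2, ncard_Ico_int, Set.ncard_empty]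
    omega
  · have e1 : Set.Iio e ∩ Set.Ici 0 = ∅ := by
      ext z; simp only [Set.mem_inter_iff, Set.mem_Iio, Set.mem_Ici, Set.mem_empty_iff_false,
        iff_false, not_and]
      intro h1
      omega
    have e2 : Set.Iio 0 \ Set.Iio e = Set.Ico e 0 := by
      ext z; simp only [Set.mem_diff, Set.mem_Iio, Set.mem_Ico]
      constructor
      · rintro ⟨h1, h2⟩; exact ⟨by omega, h1⟩
      · rintro ⟨h1, h2⟩; exact ⟨h2, by omega⟩
    rw [charge, e1, e2, ncard_Ico_int, Set.ncard_empty]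
    omega

lemma vacuum (e : ℤ) :
    ((SK (fun s => 0 ≤ s) (Set.Iio e)).ncard : ℤ)
      + ((SK (fun s => s < 0) (Set.Ici e)).ncard : ℤ) = e * (2 * e - 1) := by
  induction e using Int.induction_on with
  | zero =>
    have e1 : SK (fun s => 0 ≤ s) (Set.Iio (0:ℤ)) = ∅ := by
      ext q
      simp only [SK, Set.mem_setOf_eq, Set.mem_Iio, Set.mem_empty_iff_false, iff_false, not_and]
      intro h1 h2
      omega
    have e2 : SK (fun s => s < 0) (Set.Ici (0:ℤ)) = ∅ := by
      ext q
      simp only [SK, Set.mem_setOf_eq, Set.mem_Ici, Set.mem_empty_iff_false, iff_false, not_and]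
      intro h1 h2
      omega
    rw [e1, e2, Set.ncard_empty]
    ring
  | succ i ih =>
    set e : ℤ := (i : ℤ) with he
    have he0 : 0 ≤ e := by positivity
    have i1 : Set.Iio (e + 1) = insert e (Set.Iio e) := by
      ext z; simp only [Set.mem_Iio, Set.mem_insert_iff]; omega
    have i2 : Set.Ici e = insert e (Set.Ici (e + 1)) := by
      ext z; simp only [Set.mem_Ici, Set.mem_insert_iff]; omega
    have hx1 : e ∉ Set.Iio e := by simp
    have hx2 : e ∉ Set.Ici (e + 1) := by simp
    have hf1 : (SK (fun s => 0 ≤ s) (insert e (Set.Iio e))).Finite := by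
      rw [← i1]; exact fin_SKp (maya_Iio (e+1))
    have hf2 : (SK (fun s => s < 0) (insert e (Set.Ici (e+1)))).Finite := by
      rw [← i2, ← Set.compl_Iio]; exact fin_SKn (maya_Iio e)
    have n1 := SK_insert_ncard (fun s => 0 ≤ s) hx1 hf1
    have n2 := SK_insert_ncard (fun s => s < 0) hx2 hf2
    have s1 : {v | v ∈ Set.Iio e ∧ 0 ≤ e + v} = Set.Ico (-e) e := by
      ext z; simp only [Set.mem_setOf_eq, Set.mem_Iio, Set.mem_Ico]; omega
    have s2 : {v | v ∈ Set.Ici (e+1) ∧ e + v < 0} = Set.Ico (e+1) (-e) := by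
      ext z; simp only [Set.mem_setOf_eq, Set.mem_Ici, Set.mem_Ico]; omega
    rw [s1, ncard_Ico_int, if_pos (by omega : (0:ℤ) ≤ e + e)] at n1
    rw [s2, ncard_Ico_int, if_neg (by omega : ¬ (e + e < 0))] at n2
    have ht1 : ((e - -e).toNat : ℤ) = 2 * e := by omega
    have ht2 : ((-e - (e+1)).toNat : ℤ) = 0 := by omega
    rw [← i1] at n1
    rw [← i2] at n2
    have harith : (e+1) * (2*(e+1) - 1) = e * (2*e - 1) + 4*e + 1 := by ring
    push_cast at n1 n2 ih ⊢
    linarith [n1, n2, ih, harith, ht1, ht2]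
  | pred i ih =>
    set e : ℤ := -(i : ℤ) with he
    have he0 : e ≤ 0 := by omega
    have i1 : Set.Iio e = insert (e - 1) (Set.Iio (e - 1)) := by
      ext z; simp only [Set.mem_Iio, Set.mem_insert_iff]; omega
    have i2 : Set.Ici (e - 1) = insert (e - 1) (Set.Ici e) := by
      ext z; simp only [Set.mem_Ici, Set.mem_insert_iff]; omega
    have hx1 : e - 1 ∉ Set.Iio (e - 1) := by simp
    have hx2 : e - 1 ∉ Set.Ici e := by simp
    have hf1 : (SK (fun s => 0 ≤ s) (insert (e-1) (Set.Iio (e-1)))).Finite := by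
      rw [← i1]; exact fin_SKp (maya_Iio e)
    have hf2 : (SK (fun s => s < 0) (insert (e-1) (Set.Ici e))).Finite := by
      rw [← i2, ← Set.compl_Iio]; exact fin_SKn (maya_Iio (e-1))
    have n1 := SK_insert_ncard (fun s => 0 ≤ s) hx1 hf1
    have n2 := SK_insert_ncard (fun s => s < 0) hx2 hf2
    have s1 : {v | v ∈ Set.Iio (e-1) ∧ 0 ≤ (e-1) + v} = Set.Ico (1-e) (e-1) := by
      ext z; simp only [Set.mem_setOf_eq, Set.mem_Iio, Set.mem_Ico]; omega
    have s2 : {v | v ∈ Set.Ici e ∧ (e-1) + v < 0} = Set.Ico e (1-e) := by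
      ext z; simp only [Set.mem_setOf_eq, Set.mem_Ici, Set.mem_Ico]; omega
    rw [s1, ncard_Ico_int, if_neg (by omega : ¬ ((0:ℤ) ≤ (e-1) + (e-1)))] at n1
    rw [s2, ncard_Ico_int, if_pos (by omega : (e-1) + (e-1) < 0)] at n2
    have ht1 : ((e - 1 - (1 - e)).toNat : ℤ) = 0 := by omega
    have ht2 : ((1 - e - e).toNat : ℤ) = 1 - 2*e := by omega
    rw [← i1] at n1
    rw [← i2] at n2
    have harith : (e - 1) * (2*(e-1) - 1) = e * (2*e - 1) + 3 - 4*e := by ring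
    have hgoal : ((SK (fun s => 0 ≤ s) (Set.Iio (e-1))).ncard : ℤ)
        + ((SK (fun s => s < 0) (Set.Ici (e-1))).ncard : ℤ) = (e-1) * (2*(e-1) - 1) := by
      push_cast at n1 n2 ih ⊢
      linarith [n1, n2, ih, harith, ht1, ht2]
    have hcast : (-(i:ℤ) - 1) = e - 1 := by rw [he]
    rw [hcast]
    exact hgoal



/-! ### the move lemma -/

open Classical in
lemma move {Y : Set ℤ} (hY : Maya Y) {x : ℤ} (hxY : x ∈ Y) (hx1 : x - 1 ∉ Y) :
    Maya (insert (x-1) (Y \ {x})) ∧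
    charge (insert (x-1) (Y \ {x})) = charge Y ∧
    (Pairs Y).ncard = (Pairs (insert (x-1) (Y \ {x}))).ncard + 1 ∧
    (SK (fun s => 0 ≤ s) Y).ncard + (SK (fun s => s < 0) Yᶜ).ncard
      = (SK (fun s => 0 ≤ s) (insert (x-1) (Y \ {x}))).ncard
        + (SK (fun s => s < 0) (insert (x-1) (Y \ {x}))ᶜ).ncard + 2 := by
  classical
  set S := Y \ {x} with hS
  set C := Yᶜ \ {x-1} with hC
  set Y' := insert (x-1) S with hY'def
  have hxS : x ∉ S := by simp [hS]
  have hx1S : x - 1 ∉ S := by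
    simp only [hS, Set.mem_diff, Set.mem_singleton_iff]
    intro h
    exact absurd h.1 hx1
  have hx1C : x - 1 ∉ C := by simp [hC]
  have hxC : x ∉ C := by
    simp only [hC, Set.mem_diff, Set.mem_compl_iff]
    intro h
    exact absurd hxY h.1
  have idY : Y = insert x S := by
    ext z
    simp only [hS, Set.mem_insert_iff, Set.mem_diff, Set.mem_singleton_iff]
    by_cases hz : z = x
    · subst hz; simp [hxY]
    · simp [hz]
  have idYc : Yᶜ = insert (x-1) C := by
    ext z
    simp only [hC, Set.mem_insert_iff, Set.mem_diff, Set.mem_compl_iff]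
    by_cases hz : z = x - 1
    · subst hz; simp [hx1]
    · simp [hz]
  have idY'c : Y'ᶜ = insert x C := by
    ext z
    simp only [hY'def, hC, hS, Set.mem_compl_iff, Set.mem_insert_iff, Set.mem_diff,
      Set.mem_singleton_iff]
    by_cases hz : z = x
    · subst hz; simp [hxY]; omega
    · by_cases hz1 : z = x - 1
      · subst hz1; simp [hx1]
      · simp [hz, hz1]
  -- Maya Y'
  have hmaya' : Maya Y' := by
    obtain ⟨N1, h1⟩ := hY.1
    obtain ⟨N2, h2⟩ := hY.2
    constructor
    · refine ⟨min N1 (x-1), fun z hz => ?_⟩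
      right
      simp only [hS, Set.mem_diff, Set.mem_singleton_iff]
      exact ⟨h1 z (by omega), by omega⟩
    · refine ⟨max N2 x, fun z hz hzY' => ?_⟩
      rcases hzY' with h | h
      · omega
      · exact h2 z (by omega) h.1
  refine ⟨hmaya', ?_, ?_, ?_⟩
  · -- charge
    have fS0 : (S ∩ Set.Ici 0).Finite := by
      apply (maya_fin_above hY 0).subset
      rintro v ⟨hv, h0⟩
      exact ⟨hv.1, h0⟩
    have fC0 : (Set.Iio 0 ∩ C).Finite := by
      apply (maya_fin_gaps hY 0).subset
      rintro v ⟨h0, hv⟩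
      exact ⟨hv.1, h0⟩
    rcases lt_trichotomy x 0 with hx0 | hx0 | hx0
    · -- x < 0
      have ch1 : Y ∩ Set.Ici 0 = S ∩ Set.Ici 0 := by
        rw [idY]
        ext z
        simp only [Set.mem_inter_iff, Set.mem_insert_iff, Set.mem_Ici]
        constructor
        · rintro ⟨h | h, h0⟩
          · omega
          · exact ⟨h, h0⟩
        · rintro ⟨h, h0⟩
          exact ⟨Or.inr h, h0⟩
      have ch2 : Y' ∩ Set.Ici 0 = S ∩ Set.Ici 0 := by
        ext z
        simp only [hY'def, Set.mem_inter_iff, Set.mem_insert_iff, Set.mem_Ici]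
        constructor
        · rintro ⟨h | h, h0⟩
          · omega
          · exact ⟨h, h0⟩
        · rintro ⟨h, h0⟩
          exact ⟨Or.inr h, h0⟩
      have ch3 : Set.Iio 0 \ Y = insert (x-1) (Set.Iio 0 ∩ C) := by
        rw [Set.diff_eq, idYc]
        ext z
        simp only [Set.mem_inter_iff, Set.mem_insert_iff, Set.mem_Iio]
        constructor
        · rintro ⟨h0, h | h⟩
          · exact Or.inl h
          · exact Or.inr ⟨h0, h⟩
        · rintro (rfl | ⟨h0, h⟩)
          · exact ⟨by omega, Or.inl rfl⟩
          · exact ⟨h0, Or.inr h⟩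
      have ch4 : Set.Iio 0 \ Y' = insert x (Set.Iio 0 ∩ C) := by
        rw [Set.diff_eq, idY'c]
        ext z
        simp only [Set.mem_inter_iff, Set.mem_insert_iff, Set.mem_Iio]
        constructor
        · rintro ⟨h0, h | h⟩
          · exact Or.inl h
          · exact Or.inr ⟨h0, h⟩
        · rintro (rfl | ⟨h0, h⟩)
          · exact ⟨by omega, Or.inl rfl⟩
          · exact ⟨h0, Or.inr h⟩
      have m1 : x - 1 ∉ Set.Iio 0 ∩ C := fun h => hx1C h.2
      have m2 : x ∉ Set.Iio 0 ∩ C := fun h => hxC h.2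
      rw [charge, charge, ch1, ch2, ch3, ch4,
        Set.ncard_insert_of_notMem m1 fC0, Set.ncard_insert_of_notMem m2 fC0]
    · -- x = 0
      subst hx0
      have ch1 : Y ∩ Set.Ici 0 = insert 0 (S ∩ Set.Ici 0) := by
        rw [idY]
        ext z
        simp only [Set.mem_inter_iff, Set.mem_insert_iff, Set.mem_Ici]
        constructor
        · rintro ⟨h | h, h0⟩
          · exact Or.inl h
          · exact Or.inr ⟨h, h0⟩
        · rintro (rfl | ⟨h, h0⟩)
          · exact ⟨Or.inl rfl, le_rfl⟩
          · exact ⟨Or.inr h, h0⟩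
      have ch2 : Y' ∩ Set.Ici 0 = S ∩ Set.Ici 0 := by
        ext z
        simp only [hY'def, Set.mem_inter_iff, Set.mem_insert_iff, Set.mem_Ici]
        constructor
        · rintro ⟨h | h, h0⟩
          · omega
          · exact ⟨h, h0⟩
        · rintro ⟨h, h0⟩
          exact ⟨Or.inr h, h0⟩
      have ch3 : Set.Iio 0 \ Y = insert (0-1) (Set.Iio 0 ∩ C) := by
        rw [Set.diff_eq, idYc]
        ext z
        simp only [Set.mem_inter_iff, Set.mem_insert_iff, Set.mem_Iio]
        constructor
        · rintro ⟨h0, h | h⟩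
          · exact Or.inl h
          · exact Or.inr ⟨h0, h⟩
        · rintro (rfl | ⟨h0, h⟩)
          · exact ⟨by omega, Or.inl rfl⟩
          · exact ⟨h0, Or.inr h⟩
      have ch4 : Set.Iio 0 \ Y' = Set.Iio 0 ∩ C := by
        rw [Set.diff_eq, idY'c]
        ext z
        simp only [Set.mem_inter_iff, Set.mem_insert_iff, Set.mem_Iio]
        constructor
        · rintro ⟨h0, h | h⟩
          · omega
          · exact ⟨h0, h⟩
        · rintro ⟨h0, h⟩
          exact ⟨h0, Or.inr h⟩
      have m1 : (0:ℤ) - 1 ∉ Set.Iio 0 ∩ C := fun h => hx1C h.2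
      have m0 : (0:ℤ) ∉ S ∩ Set.Ici 0 := fun h => hxS h.1
      rw [charge, charge, ch1, ch2, ch3, ch4,
        Set.ncard_insert_of_notMem m0 fS0, Set.ncard_insert_of_notMem m1 fC0]
      push_cast
      ring
    · -- 0 < x
      have ch1 : Y ∩ Set.Ici 0 = insert x (S ∩ Set.Ici 0) := by
        rw [idY]
        ext z
        simp only [Set.mem_inter_iff, Set.mem_insert_iff, Set.mem_Ici]
        constructor
        · rintro ⟨h | h, h0⟩
          · exact Or.inl h
          · exact Or.inr ⟨h, h0⟩
        · rintro (rfl | ⟨h, h0⟩)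
          · exact ⟨Or.inl rfl, by omega⟩
          · exact ⟨Or.inr h, h0⟩
      have ch2 : Y' ∩ Set.Ici 0 = insert (x-1) (S ∩ Set.Ici 0) := by
        ext z
        simp only [hY'def, Set.mem_inter_iff, Set.mem_insert_iff, Set.mem_Ici]
        constructor
        · rintro ⟨h | h, h0⟩
          · exact Or.inl h
          · exact Or.inr ⟨h, h0⟩
        · rintro (rfl | ⟨h, h0⟩)
          · exact ⟨Or.inl rfl, by omega⟩
          · exact ⟨Or.inr h, h0⟩
      have ch3 : Set.Iio 0 \ Y = Set.Iio 0 ∩ C := by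
        rw [Set.diff_eq, idYc]
        ext z
        simp only [Set.mem_inter_iff, Set.mem_insert_iff, Set.mem_Iio]
        constructor
        · rintro ⟨h0, h | h⟩
          · omega
          · exact ⟨h0, h⟩
        · rintro ⟨h0, h⟩
          exact ⟨h0, Or.inr h⟩
      have ch4 : Set.Iio 0 \ Y' = Set.Iio 0 ∩ C := by
        rw [Set.diff_eq, idY'c]
        ext z
        simp only [Set.mem_inter_iff, Set.mem_insert_iff, Set.mem_Iio]
        constructor
        · rintro ⟨h0, h | h⟩
          · omega
          · exact ⟨h0, h⟩
        · rintro ⟨h0, h⟩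
          exact ⟨h0, Or.inr h⟩
      have m1 : x ∉ S ∩ Set.Ici 0 := fun h => hxS h.1
      have m2 : x - 1 ∉ S ∩ Set.Ici 0 := fun h => hx1S h.1
      rw [charge, charge, ch1, ch2, ch3, ch4,
        Set.ncard_insert_of_notMem m1 fS0, Set.ncard_insert_of_notMem m2 fS0]
  · -- Pairs count
    have hfinP : (Pairs Y).Finite := fin_Pairs hY
    have hfinP' : (Pairs Y').Finite := fin_Pairs hmaya'
    have hPY : Pairs Y = PP (insert x S) (insert (x-1) C) := by
      rw [Pairs, ← idY, ← idYc]
    have hPY' : Pairs Y' = PP (insert (x-1) S) (insert x C) := by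
      rw [Pairs, ← idY'c, hY'def]
    have hfin1 : (PP (insert x S) (insert (x-1) C)).Finite := hPY ▸ hfinP
    have hfin1' : (PP (insert (x-1) S) (insert x C)).Finite := hPY' ▸ hfinP'
    have hsub2 : (PP S (insert (x-1) C)).Finite := by
      apply hfin1.subset
      rintro q ⟨h1, h2, h3⟩
      exact ⟨Or.inr h1, h2, h3⟩
    have hsub2' : (PP S (insert x C)).Finite := by
      apply hfin1'.subset
      rintro q ⟨h1, h2, h3⟩
      exact ⟨Or.inr h1, h2, h3⟩
    have n1 := PP_insert_left_ncard hxS hfin1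
    have n2 := PP_insert_right_ncard hx1C hsub2
    have n1' := PP_insert_left_ncard hx1S hfin1'
    have n2' := PP_insert_right_ncard hxC hsub2'
    -- the inner count sets
    have e1 : {c | c ∈ insert (x-1) C ∧ c < x} = insert (x-1) {c | c ∈ C ∧ c < x} := by
      ext c
      simp only [Set.mem_insert_iff, Set.mem_setOf_eq]
      constructor
      · rintro ⟨rfl | h, hlt⟩
        · exact Or.inl rfl
        · exact Or.inr ⟨h, hlt⟩
      · rintro (rfl | ⟨h, hlt⟩)
        · exact ⟨Or.inl rfl, by omega⟩
        · exact ⟨Or.inr h, hlt⟩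
    have e1' : {c | c ∈ insert x C ∧ c < x - 1} = {c | c ∈ C ∧ c < x - 1} := by
      ext c
      simp only [Set.mem_insert_iff, Set.mem_setOf_eq]
      constructor
      · rintro ⟨rfl | h, hlt⟩
        · omega
        · exact ⟨h, hlt⟩
      · rintro ⟨h, hlt⟩
        exact ⟨Or.inr h, hlt⟩
    have fCx : {c | c ∈ C ∧ c < x}.Finite := by
      apply (maya_fin_gaps hY x).subset
      rintro c ⟨hc, hlt⟩
      exact ⟨hc.1, hlt⟩
    have e1c : {c | c ∈ insert (x-1) C ∧ c < x}.ncard = {c | c ∈ C ∧ c < x}.ncard + 1 := by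
      rw [e1, Set.ncard_insert_of_notMem (fun h => hx1C h.1) fCx]
    -- split equalities
    have sp1 : {c | c ∈ C ∧ c < x} = {c | c ∈ C ∧ c < (x-1) + 1} := by
      ext c; simp only [Set.mem_setOf_eq]
      constructor <;> (rintro ⟨h1, h2⟩; exact ⟨h1, by omega⟩)
    have sp1' := ncard_split_lt (S := C) (a := x - 1) (by rw [← sp1]; exact fCx)
    have sp2 : {b | b ∈ S ∧ x - 1 < b} = {v | v ∈ S ∧ x ≤ v} := by
      ext b; simp only [Set.mem_setOf_eq]
      constructor <;> (rintro ⟨h1, h2⟩; exact ⟨h1, by omega⟩)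
    have sp3 : {b | b ∈ S ∧ x < b} = {v | v ∈ S ∧ x + 1 ≤ v} := by
      ext b; simp only [Set.mem_setOf_eq]
      constructor <;> (rintro ⟨h1, h2⟩; exact ⟨h1, by omega⟩)
    have fSx : {v | v ∈ S ∧ x ≤ v}.Finite := by
      apply (maya_fin_above hY x).subset
      rintro v ⟨hv, hle⟩
      exact ⟨hv.1, hle⟩
    have sp4 := ncard_split_ge (S := S) (a := x) fSx
    rw [if_neg hxS] at sp4
    rw [if_neg hx1C] at sp1'
    rw [hPY, hPY', n1, n2, n1', n2', e1c, e1', sp2, sp3, sp4]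
    rw [← sp1] at sp1'
    rw [sp1']
    ring
  · -- the SK counts
    have hfp : (SK (fun s => 0 ≤ s) Y).Finite := fin_SKp hY
    have hfn : (SK (fun s => s < 0) Yᶜ).Finite := fin_SKn hY
    have hfp' : (SK (fun s => 0 ≤ s) Y').Finite := fin_SKp hmaya'
    have hfn' : (SK (fun s => s < 0) Y'ᶜ).Finite := fin_SKn hmaya'
    have hfpI : (SK (fun s => 0 ≤ s) (insert x S)).Finite := by rw [← idY]; exact hfp
    have hfnI : (SK (fun s => s < 0) (insert (x-1) C)).Finite := by rw [← idYc]; exact hfn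
    have hfpI' : (SK (fun s => 0 ≤ s) (insert (x-1) S)).Finite := by rw [← hY'def]; exact hfp'
    have hfnI' : (SK (fun s => s < 0) (insert x C)).Finite := by rw [← idY'c]; exact hfn'
    have r1 : {v | v ∈ S ∧ (fun s : ℤ => 0 ≤ s) (x + v)} = {v | v ∈ S ∧ -x ≤ v} := by
      ext v; simp only [Set.mem_setOf_eq]
      constructor <;> (rintro ⟨h1, h2⟩; exact ⟨h1, by omega⟩)
    have r1' : {v | v ∈ S ∧ (fun s : ℤ => 0 ≤ s) ((x-1) + v)} = {v | v ∈ S ∧ (-x) + 1 ≤ v} := by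
      ext v; simp only [Set.mem_setOf_eq]
      constructor <;> (rintro ⟨h1, h2⟩; exact ⟨h1, by omega⟩)
    have r2 : {v | v ∈ C ∧ (fun s : ℤ => s < 0) ((x-1) + v)} = {v | v ∈ C ∧ v < (-x) + 1} := by
      ext v; simp only [Set.mem_setOf_eq]
      constructor <;> (rintro ⟨h1, h2⟩; exact ⟨h1, by omega⟩)
    have r2' : {v | v ∈ C ∧ (fun s : ℤ => s < 0) (x + v)} = {v | v ∈ C ∧ v < -x} := by
      ext v; simp only [Set.mem_setOf_eq]
      constructor <;> (rintro ⟨h1, h2⟩; exact ⟨h1, by omega⟩)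
    have fS : {v | v ∈ S ∧ -x ≤ v}.Finite := by
      apply (maya_fin_above hY (-x)).subset
      rintro v ⟨hv, hle⟩
      exact ⟨hv.1, hle⟩
    have fC : {v | v ∈ C ∧ v < (-x) + 1}.Finite := by
      apply (maya_fin_gaps hY ((-x)+1)).subset
      rintro v ⟨hv, hlt⟩
      exact ⟨hv.1, hlt⟩
    have hdistinct : x ≠ 0 → ((-x ∈ S ∧ -x ∉ C) ∨ (-x ∉ S ∧ -x ∈ C)) := by
      intro hx0
      have h1 : -x ≠ x := by omega
      have h2 : -x ≠ x - 1 := by omega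
      by_cases hm : -x ∈ Y
      · left
        refine ⟨?_, ?_⟩
        · simp only [hS, Set.mem_diff, Set.mem_singleton_iff]
          exact ⟨hm, h1⟩
        · simp only [hC, Set.mem_diff, Set.mem_compl_iff]
          intro h
          exact h.1 hm
      · right
        refine ⟨?_, ?_⟩
        · simp only [hS, Set.mem_diff, Set.mem_singleton_iff]
          intro h
          exact hm h.1
        · simp only [hC, Set.mem_diff, Set.mem_compl_iff]
          exact ⟨hm, h2⟩
    rw [idYc, idY, idY'c, hY'def]
    rcases lt_trichotomy x 0 with hx0 | hx0 | hx0
    · -- x < 0 : both + are neg, both - are pos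
      have n1 := SK_insert_ncard_neg (fun s : ℤ => 0 ≤ s) hxS hfpI
        (show ¬ ((0:ℤ) ≤ x + x) by omega)
      have n1' := SK_insert_ncard_neg (fun s : ℤ => 0 ≤ s) hx1S hfpI'
        (show ¬ ((0:ℤ) ≤ (x-1) + (x-1)) by omega)
      have n2 := SK_insert_ncard_pos (fun s : ℤ => s < 0) hx1C hfnI
        (show ((x-1) + (x-1) : ℤ) < 0 by omega)
      have n2' := SK_insert_ncard_pos (fun s : ℤ => s < 0) hxC hfnI'
        (show (x + x : ℤ) < 0 by omega)
      rw [n1, n1', n2, n2', r1, r1', r2, r2']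
      rcases hdistinct (by omega) with ⟨h1, h2⟩ | ⟨h1, h2⟩
      · rw [ncard_split_ge_mem fS h1, ncard_split_lt_not fC h2]
        ring
      · rw [ncard_split_ge_not fS h1, ncard_split_lt_mem fC h2]
        ring
    · -- x = 0
      subst hx0
      have h1 : -(0:ℤ) ∉ S := by simpa using hxS
      have h2 : -(0:ℤ) ∉ C := by simpa using hxC
      have n1 := SK_insert_ncard_pos (fun s : ℤ => 0 ≤ s) hxS hfpI
        (show (0:ℤ) ≤ 0 + 0 by omega)
      have n1' := SK_insert_ncard_neg (fun s : ℤ => 0 ≤ s) hx1S hfpI'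
        (show ¬ ((0:ℤ) ≤ ((0:ℤ)-1) + ((0:ℤ)-1)) by omega)
      have n2 := SK_insert_ncard_pos (fun s : ℤ => s < 0) hx1C hfnI
        (show (((0:ℤ)-1) + ((0:ℤ)-1) : ℤ) < 0 by omega)
      have n2' := SK_insert_ncard_neg (fun s : ℤ => s < 0) hxC hfnI'
        (show ¬ (((0:ℤ) + 0 : ℤ) < 0) by omega)
      rw [n1, n1', n2, n2', r1, r1', r2, r2']
      rw [ncard_split_ge_not fS h1, ncard_split_lt_not fC h2]
      ring
    · -- 0 < x
      have n1 := SK_insert_ncard_pos (fun s : ℤ => 0 ≤ s) hxS hfpI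
        (show (0:ℤ) ≤ x + x by omega)
      have n1' := SK_insert_ncard_pos (fun s : ℤ => 0 ≤ s) hx1S hfpI'
        (show (0:ℤ) ≤ (x-1) + (x-1) by omega)
      have n2 := SK_insert_ncard_neg (fun s : ℤ => s < 0) hx1C hfnI
        (show ¬ (((x-1) + (x-1) : ℤ) < 0) by omega)
      have n2' := SK_insert_ncard_neg (fun s : ℤ => s < 0) hxC hfnI'
        (show ¬ ((x + x : ℤ) < 0) by omega)
      rw [n1, n1', n2, n2', r1, r1', r2, r2']
      rcases hdistinct (by omega) with ⟨h1, h2⟩ | ⟨h1, h2⟩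
      · rw [ncard_split_ge_mem fS h1, ncard_split_lt_not fC h2]
        ring
      · rw [ncard_split_ge_not fS h1, ncard_split_lt_mem fC h2]
        ring



lemma exists_descent {Y : Set ℤ} (hne : (Pairs Y).Nonempty) : ∃ x ∈ Y, x - 1 ∉ Y := by
  obtain ⟨⟨b, c⟩, hb, hc, hcb⟩ := hne
  simp only [Set.mem_compl_iff] at hc
  have hbdd : ∃ lo : ℤ, ∀ z : ℤ, (z ∈ Y ∧ c < z) → lo ≤ z := ⟨c + 1, fun z hz => by omega⟩
  obtain ⟨x, ⟨hxY, hcx⟩, hmin⟩ := Int.exists_least_of_bdd hbdd ⟨b, hb, hcb⟩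
  refine ⟨x, hxY, ?_⟩
  intro hx1
  rcases eq_or_lt_of_le (show c ≤ x - 1 by omega) with h | h
  · exact hc (h ▸ hx1)
  · have := hmin (x-1) ⟨hx1, h⟩
    omega

lemma key : ∀ (n : ℕ) (Y : Set ℤ), Maya Y → (Pairs Y).ncard = n →
    ((SK (fun s => 0 ≤ s) Y).ncard : ℤ) + ((SK (fun s => s < 0) Yᶜ).ncard : ℤ)
      = 2 * n + charge Y * (2 * charge Y - 1) := by
  intro n
  induction n with
  | zero =>
    intro Y hY hcard
    have hemp : Pairs Y = ∅ := (Set.ncard_eq_zero (fin_Pairs hY)).1 hcard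
    have hdown : ∀ b ∈ Y, ∀ c, c < b → c ∈ Y := by
      intro b hb c hcb
      by_contra hc
      have : (b, c) ∈ Pairs Y := ⟨hb, hc, hcb⟩
      rw [hemp] at this
      exact this
    obtain ⟨N2, h2⟩ := hY.2
    obtain ⟨g, hg, hmax⟩ := Int.exists_greatest_of_bdd
      ⟨N2, fun z hz => by by_contra h; push_neg at h; exact h2 z h hz⟩ (maya_nonempty hY)
    have hYeq : Y = Set.Iio (g + 1) := by
      ext z
      simp only [Set.mem_Iio]
      constructor
      · intro hz
        have := hmax z hz
        omega
      · intro hz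
        rcases eq_or_lt_of_le (show z ≤ g by omega) with h | h
        · exact h ▸ hg
        · exact hdown g hg z h
    rw [hYeq, charge_Iio, Set.compl_Iio]
    have := vacuum (g + 1)
    push_cast
    linarith [this]
  | succ n ih =>
    intro Y hY hcard
    have hne : (Pairs Y).Nonempty := by
      apply Set.nonempty_of_ncard_ne_zero
      omega
    obtain ⟨x, hxY, hx1⟩ := exists_descent hne
    obtain ⟨hmaya', hch, hpair, hsk⟩ := move hY hxY hx1
    have hcard' : (Pairs (insert (x-1) (Y \ {x}))).ncard = n := by omega
    have := ih _ hmaya' hcard'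
    rw [hch] at this
    push_cast at this hsk ⊢
    linarith [this, hsk]



/-! ### parity decomposition -/

def halfX (X : Set ℤ) : Set ℤ := {y | 2*y ∈ X}

lemma sym_mem {X : Set ℤ} (hsym : Sym X) {z : ℤ} (h : z ∈ X) : -1 - z ∉ X := (hsym z).1 h

lemma sym_notmem {X : Set ℤ} (hsym : Sym X) {z : ℤ} (h : z ∉ X) : -1 - z ∈ X := by
  apply (hsym (-1 - z)).2
  have e : -1 - (-1 - z) = z := by ring
  rw [e]
  exact h

lemma mem_halfX {X : Set ℤ} {y : ℤ} : y ∈ halfX X ↔ 2*y ∈ X := Iff.rfl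

lemma even_part {X : Set ℤ} (hX : Maya X) (hsym : Sym X) :
    {q ∈ Pairs X | Even (q.1 - q.2)}.ncard = 2 * (Pairs (halfX X)).ncard := by
  set Y := halfX X with hY
  set m1 : ℤ × ℤ → ℤ × ℤ := fun q => (2*q.1, 2*q.2) with hm1
  set m2 : ℤ × ℤ → ℤ × ℤ := fun q => (-1-2*q.2, -1-2*q.1) with hm2
  have hdec : {q ∈ Pairs X | Even (q.1 - q.2)} = m1 '' Pairs Y ∪ m2 '' Pairs Y := by
    ext q
    constructor
    · rintro ⟨⟨hb, hc, hlt⟩, heven⟩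
      simp only [Set.mem_compl_iff] at hc
      obtain ⟨r, hr⟩ := heven
      rcases Int.even_or_odd q.1 with ⟨u, hu⟩ | ⟨u, hu⟩
      · rcases Int.even_or_odd q.2 with ⟨v, hv⟩ | ⟨v, hv⟩
        · left
          refine ⟨(u, v), ⟨?_, ?_, ?_⟩, ?_⟩
          · show 2*u ∈ X
            have e : 2*u = q.1 := by omega
            rw [e]; exact hb
          · show ¬ (2*v ∈ X)
            have e : 2*v = q.2 := by omega
            rw [e]; exact hc
          · omega
          · simp only [hm1]
            ext <;> simp <;> omega
        · omega
      · rcases Int.even_or_odd q.2 with ⟨v, hv⟩ | ⟨v, hv⟩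
        · omega
        · right
          refine ⟨(-1-v, -1-u), ⟨?_, ?_, ?_⟩, ?_⟩
          · show 2*(-1-v) ∈ X
            have e : 2*(-1-v) = -1 - q.2 := by omega
            rw [e]
            exact sym_notmem hsym hc
          · show ¬ (2*(-1-u) ∈ X)
            have e : 2*(-1-u) = -1 - q.1 := by omega
            rw [e]
            exact sym_mem hsym hb
          · omega
          · simp only [hm2]
            ext <;> simp <;> omega
    · rintro (⟨⟨u, v⟩, ⟨hu, hv, hlt⟩, rfl⟩ | ⟨⟨u, v⟩, ⟨hu, hv, hlt⟩, rfl⟩)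
      · have hu' : 2*u ∈ X := hu
        have hv' : 2*v ∉ X := hv
        refine ⟨⟨hu', hv', by simp only [hm1]; omega⟩, ?_⟩
        exact ⟨u - v, by simp only [hm1]; ring⟩
      · have hu' : 2*u ∈ X := hu
        have hv' : 2*v ∉ X := hv
        refine ⟨⟨?_, ?_, ?_⟩, ?_⟩
        · show -1-2*v ∈ X
          exact sym_notmem hsym hv'
        · show ¬ (-1-2*u ∈ X)
          exact sym_mem hsym hu'
        · simp only [hm2]; omega
        · exact ⟨u - v, by simp only [hm2]; ring⟩
  have hfin : {q ∈ Pairs X | Even (q.1 - q.2)}.Finite :=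
    (fin_Pairs hX).subset (fun q hq => hq.1)
  have hf1 : (m1 '' Pairs Y).Finite := by
    apply hfin.subset
    intro q hq
    rw [hdec]
    exact Or.inl hq
  have hf2 : (m2 '' Pairs Y).Finite := by
    apply hfin.subset
    intro q hq
    rw [hdec]
    exact Or.inr hq
  have hdisj : Disjoint (m1 '' Pairs Y) (m2 '' Pairs Y) := by
    rw [Set.disjoint_left]
    rintro q ⟨a, _, rfl⟩ ⟨b, _, hb⟩
    have h1 := congrArg Prod.fst hb
    simp only [hm1, hm2] at h1
    omega
  have hi1 : Set.InjOn m1 (Pairs Y) := by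
    intro a _ b _ h
    have h1 := congrArg Prod.fst h
    have h2 := congrArg Prod.snd h
    simp only [hm1] at h1 h2
    exact Prod.ext (by omega) (by omega)
  have hi2 : Set.InjOn m2 (Pairs Y) := by
    intro a _ b _ h
    have h1 := congrArg Prod.fst h
    have h2 := congrArg Prod.snd h
    simp only [hm2] at h1 h2
    exact Prod.ext (by omega) (by omega)
  rw [hdec, Set.ncard_union_eq hdisj hf1 hf2, Set.ncard_image_of_injOn hi1,
    Set.ncard_image_of_injOn hi2]
  ring

lemma odd_part {X : Set ℤ} (hX : Maya X) (hsym : Sym X) :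
    {q ∈ Pairs X | Odd (q.1 - q.2)}.ncard
      = (SK (fun s => 0 ≤ s) (halfX X)).ncard + (SK (fun s => s < 0) (halfX X)ᶜ).ncard := by
  set Y := halfX X with hY
  set m3 : ℤ × ℤ → ℤ × ℤ := fun q => (2*q.1, -1-2*q.2) with hm3
  set m4 : ℤ × ℤ → ℤ × ℤ := fun q => (-1-2*q.1, 2*q.2) with hm4
  have hdec : {q ∈ Pairs X | Odd (q.1 - q.2)}
      = m3 '' SK (fun s => 0 ≤ s) Y ∪ m4 '' SK (fun s => s < 0) Yᶜ := by
    ext q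
    constructor
    · rintro ⟨⟨hb, hc, hlt⟩, hodd⟩
      simp only [Set.mem_compl_iff] at hc
      obtain ⟨r, hr⟩ := hodd
      rcases Int.even_or_odd q.1 with ⟨u, hu⟩ | ⟨u, hu⟩
      · rcases Int.even_or_odd q.2 with ⟨v, hv⟩ | ⟨v, hv⟩
        · omega
        · left
          refine ⟨(u, -1-v), ⟨?_, ?_, ?_⟩, ?_⟩
          · show 2*u ∈ X
            have e : 2*u = q.1 := by omega
            rw [e]; exact hb
          · show 2*(-1-v) ∈ X
            have e : 2*(-1-v) = -1 - q.2 := by omega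
            rw [e]; exact sym_notmem hsym hc
          · show (0:ℤ) ≤ u + (-1-v)
            omega
          · simp only [hm3]
            ext <;> simp <;> omega
      · rcases Int.even_or_odd q.2 with ⟨v, hv⟩ | ⟨v, hv⟩
        · right
          refine ⟨(-1-u, v), ⟨?_, ?_, ?_⟩, ?_⟩
          · show (-1-u) ∈ Yᶜ
            simp only [Set.mem_compl_iff, hY, mem_halfX]
            have e : 2*(-1-u) = -1 - q.1 := by omega
            rw [e]
            exact sym_mem hsym hb
          · show v ∈ Yᶜ
            simp only [Set.mem_compl_iff, hY, mem_halfX]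
            have e : 2*v = q.2 := by omega
            rw [e]; exact hc
          · show ((-1-u) + v : ℤ) < 0
            omega
          · simp only [hm4]
            ext <;> simp <;> omega
        · omega
    · rintro (⟨⟨u, v⟩, ⟨hu, hv, hk⟩, rfl⟩ | ⟨⟨u, v⟩, ⟨hu, hv, hk⟩, rfl⟩)
      · have hu' : 2*u ∈ X := hu
        have hv' : 2*v ∈ X := hv
        simp only at hk
        refine ⟨⟨hu', sym_mem hsym hv', by simp only [hm3]; omega⟩, ?_⟩
        exact ⟨u + v, by simp only [hm3]; ring⟩
      · simp only [Set.mem_compl_iff, hY, mem_halfX] at hu hv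
        simp only at hk
        refine ⟨⟨sym_notmem hsym hu, hv, by simp only [hm4]; omega⟩, ?_⟩
        exact ⟨-1 - u - v, by simp only [hm4]; ring⟩
  have hfin : {q ∈ Pairs X | Odd (q.1 - q.2)}.Finite :=
    (fin_Pairs hX).subset (fun q hq => hq.1)
  have hf1 : (m3 '' SK (fun s => 0 ≤ s) Y).Finite := by
    apply hfin.subset
    intro q hq
    rw [hdec]
    exact Or.inl hq
  have hf2 : (m4 '' SK (fun s => s < 0) Yᶜ).Finite := by
    apply hfin.subset
    intro q hq
    rw [hdec]
    exact Or.inr hq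
  have hdisj : Disjoint (m3 '' SK (fun s => 0 ≤ s) Y) (m4 '' SK (fun s => s < 0) Yᶜ) := by
    rw [Set.disjoint_left]
    rintro q ⟨a, _, rfl⟩ ⟨b, _, hb⟩
    have h1 := congrArg Prod.fst hb
    simp only [hm3, hm4] at h1
    omega
  have hi3 : Set.InjOn m3 (SK (fun s => 0 ≤ s) Y) := by
    intro a _ b _ h
    have h1 := congrArg Prod.fst h
    have h2 := congrArg Prod.snd h
    simp only [hm3] at h1 h2
    exact Prod.ext (by omega) (by omega)
  have hi4 : Set.InjOn m4 (SK (fun s => s < 0) Yᶜ) := by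
    intro a _ b _ h
    have h1 := congrArg Prod.fst h
    have h2 := congrArg Prod.snd h
    simp only [hm4] at h1 h2
    exact Prod.ext (by omega) (by omega)
  rw [hdec, Set.ncard_union_eq hdisj hf1 hf2, Set.ncard_image_of_injOn hi3,
    Set.ncard_image_of_injOn hi4]

lemma pairs_split {X : Set ℤ} (hX : Maya X) :
    (Pairs X).ncard
      = {q ∈ Pairs X | Even (q.1 - q.2)}.ncard + {q ∈ Pairs X | Odd (q.1 - q.2)}.ncard := by
  have hdec : Pairs X = {q ∈ Pairs X | Even (q.1 - q.2)} ∪ {q ∈ Pairs X | Odd (q.1 - q.2)} := by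
    ext q
    constructor
    · intro hq
      rcases Int.even_or_odd (q.1 - q.2) with h | h
      · exact Or.inl ⟨hq, h⟩
      · exact Or.inr ⟨hq, h⟩
    · rintro (⟨hq, _⟩ | ⟨hq, _⟩)
      · exact hq
      · exact hq
  have hdisj : Disjoint {q ∈ Pairs X | Even (q.1 - q.2)} {q ∈ Pairs X | Odd (q.1 - q.2)} := by
    rw [Set.disjoint_left]
    rintro q ⟨_, he⟩ ⟨_, ho⟩
    exact (Int.not_odd_iff_even.2 he) ho
  have hf1 : {q ∈ Pairs X | Even (q.1 - q.2)}.Finite := (fin_Pairs hX).subset (fun q hq => hq.1)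
  have hf2 : {q ∈ Pairs X | Odd (q.1 - q.2)}.Finite := (fin_Pairs hX).subset (fun q hq => hq.1)
  rw [← Set.ncard_union_eq hdisj hf1 hf2, ← hdec]



/-! ### shifts, doubling, symmetry transfer -/

def shf (X : Set ℤ) (d : ℤ) : Set ℤ := {z | z - d ∈ X}

lemma mem_shf {X : Set ℤ} {d z : ℤ} : z ∈ shf X d ↔ z - d ∈ X := Iff.rfl

lemma maya_shf {X : Set ℤ} (hX : Maya X) (d : ℤ) : Maya (shf X d) := by
  obtain ⟨⟨N1, h1⟩, ⟨N2, h2⟩⟩ := hX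
  exact ⟨⟨N1 + d, fun z hz => h1 _ (by omega)⟩, ⟨N2 + d, fun z hz h => h2 _ (by omega) h⟩⟩

lemma shf_zero (X : Set ℤ) : shf X 0 = X := by
  ext z; simp [mem_shf]

lemma shf_shf (X : Set ℤ) (d e : ℤ) : shf (shf X d) e = shf X (d + e) := by
  ext z
  simp only [mem_shf]
  have h : z - e - d = z - (d + e) := by ring
  rw [h]

lemma charge_shf_one {X : Set ℤ} (hX : Maya X) : charge (shf X 1) = charge X + 1 := by
  classical
  have e1 : shf X 1 ∩ Set.Ici 0 = (fun v => v + 1) '' {v | v ∈ X ∧ -1 ≤ v} := by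
    ext z
    simp only [Set.mem_inter_iff, mem_shf, Set.mem_Ici, Set.mem_image, Set.mem_setOf_eq]
    constructor
    · rintro ⟨h1, h2⟩
      exact ⟨z - 1, ⟨h1, by omega⟩, by omega⟩
    · rintro ⟨v, ⟨hv, h1⟩, rfl⟩
      exact ⟨by simpa using hv, by omega⟩
  have e2 : Set.Iio 0 \ shf X 1 = (fun v => v + 1) '' {v | v ∉ X ∧ v < -1} := by
    ext z
    simp only [Set.mem_diff, mem_shf, Set.mem_Iio, Set.mem_image, Set.mem_setOf_eq]
    constructor
    · rintro ⟨h1, h2⟩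
      exact ⟨z - 1, ⟨h2, by omega⟩, by omega⟩
    · rintro ⟨v, ⟨hv, h1⟩, rfl⟩
      exact ⟨by omega, by simpa using hv⟩
  have e3 : X ∩ Set.Ici 0 = {v | v ∈ X ∧ 0 ≤ v} := by
    ext v; simp [Set.mem_inter_iff]
  have e4 : Set.Iio 0 \ X = {v | v ∈ Xᶜ ∧ v < 0} := by
    ext v
    simp only [Set.mem_diff, Set.mem_Iio, Set.mem_setOf_eq, Set.mem_compl_iff]
    tauto
  have hiinj : Set.InjOn (fun v : ℤ => v + 1) {v | v ∈ X ∧ -1 ≤ v} := by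
    intro a _ b _ h; simpa using h
  have hiinj2 : Set.InjOn (fun v : ℤ => v + 1) {v | v ∉ X ∧ v < -1} := by
    intro a _ b _ h; simpa using h
  have fup : {v | v ∈ X ∧ -1 ≤ v}.Finite := maya_fin_above hX (-1)
  have fdn : {v | v ∈ Xᶜ ∧ v < 0}.Finite := by
    apply (maya_fin_gaps hX 0).subset
    rintro v ⟨hv, h⟩
    exact ⟨hv, h⟩
  have fdn' : {v | v ∈ Xᶜ ∧ v < -1 + 1}.Finite := by
    apply fdn.subset
    rintro v ⟨hv, h⟩
    exact ⟨hv, by omega⟩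
  have br1 : {v : ℤ | v ∈ X ∧ -1 + 1 ≤ v} = {v | v ∈ X ∧ 0 ≤ v} := by
    ext v; simp only [Set.mem_setOf_eq]
    constructor <;> (rintro ⟨h1, h2⟩; exact ⟨h1, by omega⟩)
  have br2 : {v : ℤ | v ∈ Xᶜ ∧ v < -1 + 1} = {v | v ∈ Xᶜ ∧ v < 0} := by
    ext v; simp only [Set.mem_setOf_eq]
    constructor <;> (rintro ⟨h1, h2⟩; exact ⟨h1, by omega⟩)
  have br3 : {v : ℤ | v ∉ X ∧ v < -1} = {v | v ∈ Xᶜ ∧ v < -1} := by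
    ext v; simp only [Set.mem_setOf_eq, Set.mem_compl_iff]
  rw [charge, charge, e1, e2, Set.ncard_image_of_injOn hiinj, Set.ncard_image_of_injOn hiinj2,
    e3, e4, br3]
  by_cases hm : (-1 : ℤ) ∈ X
  · have c1 := ncard_split_ge_mem (S := X) (a := -1) fup hm
    rw [br1] at c1
    have c2 := ncard_split_lt_not (S := Xᶜ) (a := -1) fdn' (by simpa using hm)
    rw [br2] at c2
    omega
  · have c1 := ncard_split_ge_not (S := X) (a := -1) fup hm
    rw [br1] at c1
    have c2 := ncard_split_lt_mem (S := Xᶜ) (a := -1) fdn' (by simpa using hm)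
    rw [br2] at c2
    omega

lemma charge_shf {X : Set ℤ} (hX : Maya X) (d : ℤ) : charge (shf X d) = charge X + d := by
  induction d using Int.induction_on with
  | zero => rw [shf_zero]; ring
  | succ i ih =>
    have h1 := charge_shf_one (maya_shf hX (i : ℤ))
    rw [shf_shf] at h1
    rw [h1, ih]
    push_cast
    ring
  | pred i ih =>
    have h1 := charge_shf_one (maya_shf hX (-(i:ℤ) - 1))
    rw [shf_shf] at h1
    have e : (-(i:ℤ) - 1) + 1 = -(i:ℤ) := by ring
    rw [e] at h1
    rw [ih] at h1
    push_cast at h1 ⊢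
    omega

lemma pairs_shf (X : Set ℤ) (d : ℤ) :
    (Pairs (shf X d)).ncard = (Pairs X).ncard := by
  have himg : Pairs (shf X d) = (fun q : ℤ × ℤ => (q.1 + d, q.2 + d)) '' Pairs X := by
    ext q
    constructor
    · rintro ⟨h1, h2, h3⟩
      simp only [Set.mem_compl_iff, mem_shf] at h1 h2
      exact ⟨(q.1 - d, q.2 - d), ⟨h1, h2, by omega⟩, by ext <;> simp <;> omega⟩
    · rintro ⟨⟨a, b⟩, ⟨h1, h2, h3⟩, rfl⟩
      refine ⟨?_, ?_, by simpa using by omega⟩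
      · show (a + d) - d ∈ X
        simpa using h1
      · show (b + d) ∉ shf X d
        simp only [mem_shf]
        simpa using h2
  have hinj : Set.InjOn (fun q : ℤ × ℤ => (q.1 + d, q.2 + d)) (Pairs X) := by
    intro a _ b _ h
    have h1 := congrArg Prod.fst h
    have h2 := congrArg Prod.snd h
    simp only at h1 h2
    exact Prod.ext (by omega) (by omega)
  rw [himg, Set.ncard_image_of_injOn hinj]

lemma closure_shf {X : Set ℤ} {d t : ℤ} :
    (∀ x ∈ X, x - t ∈ X) ↔ (∀ x ∈ shf X d, x - t ∈ shf X d) := by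
  constructor
  · intro h x hx
    simp only [mem_shf] at hx ⊢
    have e : x - t - d = (x - d) - t := by ring
    rw [e]
    exact h _ hx
  · intro h x hx
    have hx' : x + d ∈ shf X d := by
      simp only [mem_shf]
      simpa using hx
    have := h _ hx'
    simp only [mem_shf] at this
    have e : x + d - t - d = x - t := by ring
    rwa [e] at this

/-! ### doubling -/

def dbl (Y : Set ℤ) : Set ℤ := {x | (∃ y ∈ Y, x = 2*y) ∨ (∃ w, w ∉ Y ∧ x = -1-2*w)}

lemma mem_dbl_even {Y : Set ℤ} {y : ℤ} : 2*y ∈ dbl Y ↔ y ∈ Y := by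
  constructor
  · rintro (⟨y', hy', he⟩ | ⟨w, hw, he⟩)
    · have : y = y' := by omega
      rwa [this]
    · omega
  · intro hy
    exact Or.inl ⟨y, hy, rfl⟩

lemma mem_dbl_odd {Y : Set ℤ} {w : ℤ} : (-1-2*w) ∈ dbl Y ↔ w ∉ Y := by
  constructor
  · rintro (⟨y', hy', he⟩ | ⟨w', hw', he⟩)
    · omega
    · have : w = w' := by omega
      rwa [this]
  · intro hw
    exact Or.inr ⟨w, hw, rfl⟩

lemma sym_dbl (Y : Set ℤ) : Sym (dbl Y) := by
  intro x
  rcases Int.even_or_odd x with ⟨y, hy⟩ | ⟨k, hk⟩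
  · have e1 : x = 2*y := by omega
    have e2 : -1 - x = -1-2*y := by omega
    rw [e2, e1, mem_dbl_even, mem_dbl_odd]
    simp
  · have e1 : x = -1-2*(-1-k) := by omega
    have e2 : -1 - x = 2*(-1-k) := by omega
    rw [e2, e1, mem_dbl_odd, mem_dbl_even]

lemma halfX_dbl (Y : Set ℤ) : halfX (dbl Y) = Y := by
  ext y
  rw [mem_halfX, mem_dbl_even]

lemma dbl_halfX {X : Set ℤ} (hsym : Sym X) : dbl (halfX X) = X := by
  ext x
  rcases Int.even_or_odd x with ⟨y, hy⟩ | ⟨k, hk⟩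
  · have e1 : x = 2*y := by omega
    rw [e1, mem_dbl_even, mem_halfX]
  · set w := -1-k with hw
    have e1 : x = -1-2*w := by omega
    rw [e1, mem_dbl_odd]
    constructor
    · intro h
      rw [mem_halfX] at h
      exact sym_notmem hsym h
    · intro h
      rw [mem_halfX]
      intro h2
      have := sym_mem hsym h2
      exact this h

lemma maya_halfX {X : Set ℤ} (hX : Maya X) : Maya (halfX X) := by
  obtain ⟨⟨N1, h1⟩, ⟨N2, h2⟩⟩ := hX
  constructor
  · refine ⟨(N1 - 1)/2, fun z hz => ?_⟩
    rw [mem_halfX]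
    apply h1
    omega
  · refine ⟨N2/2 + 1, fun z hz h => ?_⟩
    rw [mem_halfX] at h
    exact h2 _ (by omega) h

lemma maya_dbl {Y : Set ℤ} (hY : Maya Y) : Maya (dbl Y) := by
  obtain ⟨⟨N1, h1⟩, ⟨N2, h2⟩⟩ := hY
  constructor
  · refine ⟨min (2*N1) (-2-2*N2), fun z hz => ?_⟩
    rcases Int.even_or_odd z with ⟨y, hy⟩ | ⟨k, hk⟩
    · have e1 : z = 2*y := by omega
      rw [e1, mem_dbl_even]
      apply h1
      omega
    · have e1 : z = -1-2*(-1-k) := by omega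
      rw [e1, mem_dbl_odd]
      intro hmem
      exact h2 _ (by omega) hmem
  · refine ⟨max (2*N2) (-1-2*N1), fun z hz h => ?_⟩
    rcases h with ⟨y, hy, he⟩ | ⟨w, hw, he⟩
    · have : ¬ (N2 < y) := fun hc => h2 y hc hy
      omega
    · have : ¬ (w < N1) := fun hc => hw (h1 w hc)
      omega

lemma charge_sym {X : Set ℤ} (hsym : Sym X) : charge X = 0 := by
  have himg : Set.Iio 0 \ X = (fun v => -1-v) '' (X ∩ Set.Ici 0) := by
    ext c
    simp only [Set.mem_diff, Set.mem_Iio, Set.mem_image, Set.mem_inter_iff, Set.mem_Ici]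
    constructor
    · rintro ⟨h1, h2⟩
      exact ⟨-1-c, ⟨sym_notmem hsym h2, by omega⟩, by omega⟩
    · rintro ⟨v, ⟨hv, h1⟩, rfl⟩
      exact ⟨by omega, sym_mem hsym hv⟩
  rw [charge, himg, Set.ncard_image_of_injOn (by intro a _ b _ h; simp only at h; omega)]
  ring

lemma closure_half {X : Set ℤ} (hsym : Sym X) (t : ℤ) :
    (∀ x ∈ X, x - 2*t ∈ X) ↔ (∀ y ∈ halfX X, y - t ∈ halfX X) := by
  constructor
  · intro h y hy
    rw [mem_halfX] at hy ⊢
    have e : 2*(y - t) = 2*y - 2*t := by ring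
    rw [e]
    exact h _ hy
  · intro h x hx
    rcases Int.even_or_odd x with ⟨y, hy⟩ | ⟨k, hk⟩
    · have e1 : x = 2*y := by omega
      subst e1
      have h1 : y ∈ halfX X := by rw [mem_halfX]; exact hx
      have h2 := h _ h1
      rw [mem_halfX] at h2
      have e : 2*y - 2*t = 2*(y-t) := by ring
      rw [e]
      exact h2
    · have hsymx := sym_mem hsym hx
      have e2 : -1 - x = 2*(-1-k) := by omega
      rw [e2] at hsymx
      have h1 : (-1-k : ℤ) ∉ halfX X := by rw [mem_halfX]; exact hsymx
      have h2 : (-1-k+t : ℤ) ∉ halfX X := by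
        intro hc
        have := h _ hc
        have e : -1-k+t-t = -1-k := by ring
        rw [e] at this
        exact h1 this
      rw [mem_halfX] at h2
      -- 2*(-1-k+t) = -1 - (x - 2t)
      have e3 : 2*(-1-k+t) = -1 - (x - 2*t) := by omega
      rw [e3] at h2
      have h4 := sym_notmem hsym h2
      have e4 : -1 - (-1 - (x - 2*t)) = x - 2*t := by ring
      rwa [e4] at h4

/-! ### Sym vs SelfConj -/

lemma selfConj_sym (hl : IsPartition l) (hsc : SelfConj l) : Sym (beta l) := by
  intro x
  have h := beta_conj hl
  rw [hsc] at h
  exact Set.ext_iff.1 h x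

lemma sym_selfConj (hl : IsPartition l) (hsym : Sym (beta l)) : SelfConj l := by
  have h1 : beta (conj l) = beta l := by
    rw [beta_conj hl]
    ext x
    simp only [Set.mem_setOf_eq]
    constructor
    · intro h
      by_contra hc
      exact h (sym_notmem hsym hc)
    · intro h
      exact sym_mem hsym h
  have h2 := partOf_beta (conj_part hl)
  rw [h1, partOf_beta hl] at h2
  exact h2.symm



/-! ### triangular numbers -/

noncomputable def aOf (m : ℕ) : ℤ := if Even m then -((m/2 : ℕ) : ℤ) else ((m+1)/2 : ℕ)

lemma aOf_spec (m : ℕ) : aOf m * (2 * aOf m - 1) = ((m * (m+1) / 2 : ℕ) : ℤ) := by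
  rcases Nat.even_or_odd m with ⟨r, hr⟩ | ⟨r, hr⟩
  · subst hr
    rw [aOf, if_pos ⟨r, rfl⟩]
    have h1 : (r + r) / 2 = r := by omega
    have h2 : (r+r) * ((r+r)+1) / 2 = r * (2*r+1) := by
      have : (r+r) * ((r+r)+1) = 2 * (r * (2*r+1)) := by ring
      omega
    rw [h1, h2]
    push_cast
    ring
  · subst hr
    rw [aOf, if_neg (by rintro ⟨s, hs⟩; omega)]
    have h1 : (2*r+1+1)/2 = r+1 := by omega
    have h2 : (2*r+1) * ((2*r+1)+1) / 2 = (2*r+1)*(r+1) := by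
      have : (2*r+1) * ((2*r+1)+1) = 2*((2*r+1)*(r+1)) := by ring
      omega
    rw [h1, h2]
    push_cast
    ring

lemma tri_inj {c a : ℤ} (h : c * (2*c - 1) = a * (2*a - 1)) : c = a := by
  have h2 : (c - a) * (2*c + 2*a - 1) = 0 := by linear_combination h
  rcases mul_eq_zero.1 h2 with h3 | h3
  · omega
  · omega

/-! ### the maps -/

noncomputable def Phi (l : ℕ → ℕ) : ℕ → ℕ :=
  partOf (shf (halfX (beta l)) (- charge (halfX (beta l))))

noncomputable def Psi (a : ℤ) (u : ℕ → ℕ) : ℕ → ℕ := partOf (dbl (shf (beta u) a))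

lemma count_sym {X : Set ℤ} (hX : Maya X) (hsym : Sym X) :
    ((Pairs X).ncard : ℤ) = 4 * (Pairs (halfX X)).ncard
        + charge (halfX X) * (2 * charge (halfX X) - 1) ∧
    ({q ∈ Pairs X | Odd (q.1 - q.2)}.ncard : ℤ) - ({q ∈ Pairs X | Even (q.1 - q.2)}.ncard : ℤ)
      = charge (halfX X) * (2 * charge (halfX X) - 1) := by
  have hY : Maya (halfX X) := maya_halfX hX
  have hkey := key (Pairs (halfX X)).ncard (halfX X) hY rfl
  have he := even_part hX hsym
  have ho := odd_part hX hsym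
  have hs := pairs_split hX
  have he' : ({q ∈ Pairs X | Even (q.1 - q.2)}.ncard : ℤ) = 2 * (Pairs (halfX X)).ncard := by
    exact_mod_cast congrArg (Nat.cast : ℕ → ℤ) he
  have ho' : ({q ∈ Pairs X | Odd (q.1 - q.2)}.ncard : ℤ)
      = ((SK (fun s => 0 ≤ s) (halfX X)).ncard : ℤ)
        + ((SK (fun s => s < 0) (halfX X)ᶜ).ncard : ℤ) := by
    exact_mod_cast congrArg (Nat.cast : ℕ → ℤ) ho
  have hs' : ((Pairs X).ncard : ℤ) = ({q ∈ Pairs X | Even (q.1 - q.2)}.ncard : ℤ)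
      + ({q ∈ Pairs X | Odd (q.1 - q.2)}.ncard : ℤ) := by
    exact_mod_cast congrArg (Nat.cast : ℕ → ℤ) hs
  constructor
  · linarith [hkey, he', ho', hs']
  · linarith [hkey, he', ho', hs']

lemma phi_spec (hl : IsPartition l) (hsc : SelfConj l) :
    IsPartition (Phi l) ∧
    (psize l : ℤ) = 4 * psize (Phi l) + dp l ∧
    dp l = charge (halfX (beta l)) * (2 * charge (halfX (beta l)) - 1) ∧
    (∀ t : ℕ, 0 < t → IsCore l (2*t) → IsCore (Phi l) t) ∧
    Psi (charge (halfX (beta l))) (Phi l) = l := by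
  have hX : Maya (beta l) := maya_beta hl
  have hsym : Sym (beta l) := selfConj_sym hl hsc
  have hY : Maya (halfX (beta l)) := maya_halfX hX
  set c := charge (halfX (beta l)) with hc
  have hZm : Maya (shf (halfX (beta l)) (-c)) := maya_shf hY (-c)
  have hZc : charge (shf (halfX (beta l)) (-c)) = 0 := by
    rw [charge_shf hY]
    ring
  have hpart : IsPartition (Phi l) := partOf_partition hZm
  have hbeta : beta (Phi l) = shf (halfX (beta l)) (-c) := beta_partOf hZm hZc
  have hpsize : psize (Phi l) = (Pairs (halfX (beta l))).ncard := by
    rw [psize_eq hpart, hbeta, pairs_shf]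
  obtain ⟨hcount, hdp⟩ := count_sym hX hsym
  have hdpl : dp l = c * (2*c - 1) := by
    rw [dp, dp_odd_eq hl, dp_even_eq hl]
    exact hdp
  refine ⟨hpart, ?_, hdpl, ?_, ?_⟩
  · have h1 : (psize l : ℤ) = ((Pairs (beta l)).ncard : ℤ) := by
      exact_mod_cast congrArg (Nat.cast : ℕ → ℤ) (psize_eq hl)
    rw [h1, hpsize, hdpl]
    linarith [hcount]
  · intro t ht hcore
    have h2t : 0 < 2*t := by omega
    have hcl := (core_iff hl h2t).1 hcore
    have hcl' : ∀ x ∈ beta l, x - 2*(t:ℤ) ∈ beta l := by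
      intro x hx
      have h := hcl x hx
      have e : ((2*t : ℕ) : ℤ) = 2*(t:ℤ) := by push_cast; ring
      rwa [e] at h
    have hclY := (closure_half hsym (t:ℤ)).1 hcl'
    have hclZ := (closure_shf (d := -c) (t := (t:ℤ))).1 hclY
    rw [core_iff hpart ht, hbeta]
    exact hclZ
  · rw [Psi, hbeta, shf_shf]
    have e : -c + c = 0 := by ring
    rw [e, shf_zero, dbl_halfX hsym, partOf_beta hl]

lemma psi_spec {u : ℕ → ℕ} (hu : IsPartition u) (a : ℤ) :
    IsPartition (Psi a u) ∧ SelfConj (Psi a u) ∧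
    (psize (Psi a u) : ℤ) = 4 * psize u + a * (2*a - 1) ∧
    dp (Psi a u) = a * (2*a - 1) ∧
    (∀ t : ℕ, 0 < t → IsCore u t → IsCore (Psi a u) (2*t)) ∧
    Phi (Psi a u) = u := by
  have hZ : Maya (beta u) := maya_beta hu
  have hYm : Maya (shf (beta u) a) := maya_shf hZ a
  have hYc : charge (shf (beta u) a) = a := by
    rw [charge_shf hZ, charge_beta hu]
    ring
  have hXm : Maya (dbl (shf (beta u) a)) := maya_dbl hYm
  have hsym : Sym (dbl (shf (beta u) a)) := sym_dbl _
  have hXc : charge (dbl (shf (beta u) a)) = 0 := charge_sym hsym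
  have hpart : IsPartition (Psi a u) := partOf_partition hXm
  have hbeta : beta (Psi a u) = dbl (shf (beta u) a) := beta_partOf hXm hXc
  have hhalf : halfX (dbl (shf (beta u) a)) = shf (beta u) a := halfX_dbl _
  have hsym' : Sym (beta (Psi a u)) := by rw [hbeta]; exact hsym
  have hsc : SelfConj (Psi a u) := sym_selfConj hpart hsym'
  have hPY : (Pairs (shf (beta u) a)).ncard = psize u := by
    rw [pairs_shf, ← psize_eq hu]
  obtain ⟨hcount, hdp⟩ := count_sym hXm hsym
  rw [hhalf, hYc] at hcount hdp
  rw [hPY] at hcount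
  refine ⟨hpart, hsc, ?_, ?_, ?_, ?_⟩
  · have h1 : (psize (Psi a u) : ℤ) = ((Pairs (dbl (shf (beta u) a))).ncard : ℤ) := by
      exact_mod_cast congrArg (Nat.cast : ℕ → ℤ) (by rw [psize_eq hpart, hbeta])
    rw [h1]
    linarith [hcount]
  · rw [dp, dp_odd_eq hpart, dp_even_eq hpart, hbeta]
    exact hdp
  · intro t ht hcore
    have h2t : 0 < 2*t := by omega
    have hcl := (core_iff hu ht).1 hcore
    have hclY := (closure_shf (d := a) (t := (t:ℤ))).1 hcl
    rw [← hhalf] at hclY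
    have hclX := (closure_half hsym (t:ℤ)).2 hclY
    rw [core_iff hpart h2t, hbeta]
    intro x hx
    have h := hclX x hx
    have e : ((2*t : ℕ) : ℤ) = 2*(t:ℤ) := by push_cast; ring
    rwa [← e] at h
  · rw [Phi, hbeta, hhalf, hYc, shf_shf]
    have e : a + -a = 0 := by ring
    rw [e, shf_zero, partOf_beta hu]

end SCC

theorem count_selfconjugate_simultaneous_cores (m n p : ℕ) (t : Fin p → ℕ) :
    (∀ k : ℕ, n = 4 * k + m * (m + 1) / 2 →
      Set.ncard {l : ℕ → ℕ | IsPartition l ∧ SelfConj l ∧ psize l = n ∧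
          dp l = ((m * (m + 1) / 2 : ℕ) : ℤ) ∧ ∀ i : Fin p, IsCore l (2 * t i)} =
        Set.ncard {l : ℕ → ℕ | IsPartition l ∧ psize l = k ∧ ∀ i : Fin p, IsCore l (t i)}) ∧
    ((¬ ∃ k : ℕ, n = 4 * k + m * (m + 1) / 2) →
      Set.ncard {l : ℕ → ℕ | IsPartition l ∧ SelfConj l ∧ psize l = n ∧
          dp l = ((m * (m + 1) / 2 : ℕ) : ℤ) ∧ ∀ i : Fin p, IsCore l (2 * t i)} = 0) := by
  constructor
  · intro k hnk
    have himg : SCC.Phi '' {l : ℕ → ℕ | IsPartition l ∧ SelfConj l ∧ psize l = n ∧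
          dp l = ((m * (m + 1) / 2 : ℕ) : ℤ) ∧ ∀ i : Fin p, IsCore l (2 * t i)}
        = {l : ℕ → ℕ | IsPartition l ∧ psize l = k ∧ ∀ i : Fin p, IsCore l (t i)} := by
      ext u
      constructor
      · rintro ⟨l, ⟨hl, hsc, hpsz, hdp, hcores⟩, rfl⟩
        obtain ⟨hpart, hcount, hdpl, hcoret, _⟩ := SCC.phi_spec hl hsc
        refine ⟨hpart, ?_, ?_⟩
        · have h1 : ((psize l : ℕ) : ℤ) = 4 * (psize (SCC.Phi l) : ℤ)
              + ((m * (m + 1) / 2 : ℕ) : ℤ) := by rw [hcount, hdp]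
          rw [hpsz] at h1
          omega
        · intro i
          by_cases h0 : t i = 0
          · rw [h0]
            exact SCC.isCore_zero _
          · exact hcoret (t i) (by omega) (hcores i)
      · rintro ⟨hu, hpsz, hcores⟩
        obtain ⟨hp, hsc, hps, hdp, hcor, hphipsi⟩ := SCC.psi_spec hu (SCC.aOf m)
        refine ⟨SCC.Psi (SCC.aOf m) u, ⟨hp, hsc, ?_, ?_, ?_⟩, hphipsi⟩
        · have h1 : (psize (SCC.Psi (SCC.aOf m) u) : ℤ)
              = 4 * (k : ℤ) + ((m * (m + 1) / 2 : ℕ) : ℤ) := by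
            rw [hps, SCC.aOf_spec, hpsz]
          omega
        · rw [hdp, SCC.aOf_spec]
        · intro i
          by_cases h0 : t i = 0
          · rw [h0, Nat.mul_zero]
            exact SCC.isCore_zero _
          · exact hcor (t i) (by omega) (hcores i)
    have hinj : Set.InjOn SCC.Phi {l : ℕ → ℕ | IsPartition l ∧ SelfConj l ∧ psize l = n ∧
          dp l = ((m * (m + 1) / 2 : ℕ) : ℤ) ∧ ∀ i : Fin p, IsCore l (2 * t i)} := by
      rintro l1 ⟨hl1, hsc1, _, hdp1, _⟩ l2 ⟨hl2, hsc2, _, hdp2, _⟩ heq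
      obtain ⟨_, _, hdpl1, _, hpsi1⟩ := SCC.phi_spec hl1 hsc1
      obtain ⟨_, _, hdpl2, _, hpsi2⟩ := SCC.phi_spec hl2 hsc2
      have hc1 : SCC.charge (SCC.halfX (SCC.beta l1)) = SCC.aOf m := by
        apply SCC.tri_inj
        rw [← hdpl1, hdp1, SCC.aOf_spec]
      have hc2 : SCC.charge (SCC.halfX (SCC.beta l2)) = SCC.aOf m := by
        apply SCC.tri_inj
        rw [← hdpl2, hdp2, SCC.aOf_spec]
      rw [hc1] at hpsi1
      rw [hc2] at hpsi2
      rw [← hpsi1, ← hpsi2, heq]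
    rw [← himg, Set.ncard_image_of_injOn hinj]
  · intro hno
    have hempty : {l : ℕ → ℕ | IsPartition l ∧ SelfConj l ∧ psize l = n ∧
          dp l = ((m * (m + 1) / 2 : ℕ) : ℤ) ∧ ∀ i : Fin p, IsCore l (2 * t i)} = ∅ := by
      ext l
      simp only [Set.mem_setOf_eq, Set.mem_empty_iff_false, iff_false]
      rintro ⟨hl, hsc, hpsz, hdp, _⟩
      apply hno
      obtain ⟨_, hcount, _, _, _⟩ := SCC.phi_spec hl hsc
      refine ⟨psize (SCC.Phi l), ?_⟩
      have h1 : ((psize l : ℕ) : ℤ) = 4 * (psize (SCC.Phi l) : ℤ)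
          + ((m * (m + 1) / 2 : ℕ) : ℤ) := by rw [hcount, hdp]
      rw [hpsz] at h1
      omega
    rw [hempty, Set.ncard_empty]
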